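/- arXiv:1005.3623 — 15 statements merged into one kernel-verified Lean document; each statement's English description precedes it below -/
import Mathlib

section
/- For all integers x0, x1, x2 satisfying x0*x1 + x0*x2 + x1*x2 = 0, there exist integers n, a, b such that x0 = -n*a*b, x1 = n*(a^2 + a*b), and x2 = n*(a*b + b^2). -/
/-- Integral parametrization of the conic `x0*x1 + x0*x2 + x1*x2 = 0`:
every integer solution is of the form `n * (-a*b, a^2 + a*b, a*b + b^2)`. -/
theorem conic_parametrization (x0 x1 x2 : ℤ) (h : x0 * x1 + x0 * x2 + x1 * x2 = 0) :
    ∃ n a b : ℤ, x0 = -(n * a * b) ∧ x1 = n * (a ^ 2 + a * b) ∧ x2 = n * (a * b + b ^ 2) := by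
  by_cases h1 : x1 = 0
  · by_cases h0 : x0 = 0
    · exact ⟨x2, 0, 1, by simp [h0, h1], by simp [h1], by ring⟩
    · have h2 : x2 = 0 := by
        have h' : x0 * x2 = 0 := by linear_combination h - (x0 + x2) * h1
        rcases mul_eq_zero.mp h' with h' | h'
        · exact absurd h' h0
        · exact h'
      exact ⟨x0, -1, 1, by ring, by simp [h1], by simp [h2]⟩
  · by_cases h2 : x2 = 0
    · have h0 : x0 = 0 := by
        have h' : x0 * x1 = 0 := by linear_combination h - (x0 + x1) * h2
        rcases mul_eq_zero.mp h' with h' | h'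
        · exact h'
        · exact absurd h' h1
      exact ⟨x1, 1, 0, by simp [h0], by ring, by simp [h2]⟩
    · set d : ℤ := (Int.gcd x1 x2 : ℤ) with hd
      have hgpos : 0 < Int.gcd x1 x2 := Int.gcd_pos_of_ne_zero_left x2 h1
      have hdne : d ≠ 0 := by positivity
      set u : ℤ := x1 / d with hu
      set v : ℤ := x2 / d with hv
      have hx1 : x1 = d * u := (Int.mul_ediv_cancel' (Int.gcd_dvd_left x1 x2)).symm
      have hx2 : x2 = d * v := (Int.mul_ediv_cancel' (Int.gcd_dvd_right x1 x2)).symm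
      have hcop : IsCoprime u v := by
        rw [Int.isCoprime_iff_gcd_eq_one]
        exact Int.gcd_div_gcd_div_gcd hgpos
      have hune : u ≠ 0 := fun hz => h1 (by rw [hx1, hz, mul_zero])
      have hvne : v ≠ 0 := fun hz => h2 (by rw [hx2, hz, mul_zero])
      have key : x0 * (u + v) = -(d * (u * v)) := by
        have hdd : d * (x0 * (u + v) + d * (u * v)) = 0 := by
          rw [hx1, hx2] at h; linear_combination h
        rcases mul_eq_zero.mp hdd with h' | h'
        · exact absurd h' hdne
        · linarith
      have hkne : u + v ≠ 0 := by
        intro hz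
        rw [hz, mul_zero] at key
        have : d * (u * v) = 0 := by linarith
        rcases mul_eq_zero.mp this with h' | h'
        · exact hdne h'
        · rcases mul_eq_zero.mp h' with h' | h'
          · exact hune h'
          · exact hvne h'
      have hcopk : IsCoprime (u + v) (u * v) := by
        have h1' : IsCoprime (u + v) u := by
          have := (hcop.symm.add_mul_left_left 1)
          simpa [add_comm] using this
        have h2' : IsCoprime (u + v) v := by
          have := (hcop.add_mul_left_left 1)
          simpa using this
        exact h1'.mul_right h2'
      have hdvd : (u + v) ∣ d := by
        apply hcopk.dvd_of_dvd_mul_right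
        exact ⟨-x0, by linarith⟩
      obtain ⟨m, hm⟩ := hdvd
      refine ⟨m, u, v, ?_, ?_, ?_⟩
      · have : x0 * (u + v) = -(m * u * v) * (u + v) := by
          rw [key, hm]; ring
        exact mul_right_cancel₀ hkne this
      · rw [hx1, hm]; ring
      · rw [hx2, hm]; ring
end

section
/- For any k-points P and Q of the twisted Hessian curve H, each of the triples s_0(P,Q), s_1(P,Q), s_2(P,Q) again satisfies the equation of H, i.e. writing (u,v,w) = s_i(P,Q) one has a*u^3 + v^3 + w^3 = d*u*v*w for i = 0, 1, 2. -/
/-- The twisted Hessian equation `a*X^3 + Y^3 + Z^3 = d*X*Y*Z`. -/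
def hessianEq {k : Type*} [Field k] (a d u v w : k) : Prop :=
  a * u ^ 3 + v ^ 3 + w ^ 3 = d * u * v * w

/-- The three bidegree (2,2) addition laws on the twisted Hessian curve,
as a `Fin 3`-indexed family of coordinate triples. -/
def hessianLaw {k : Type*} [Field k] (a x1 y1 z1 x2 y2 z2 : k) : Fin 3 → Fin 3 → k :=
  ![![x1 ^ 2 * y2 * z2 - y1 * z1 * x2 ^ 2,
     z1 ^ 2 * x2 * y2 - x1 * y1 * z2 ^ 2,
     y1 ^ 2 * x2 * z2 - x1 * z1 * y2 ^ 2],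
    ![x1 * y1 * y2 ^ 2 - z1 ^ 2 * x2 * z2,
     a * x1 * z1 * x2 ^ 2 - y1 ^ 2 * y2 * z2,
     y1 * z1 * z2 ^ 2 - a * x1 ^ 2 * x2 * y2],
    ![x1 * z1 * z2 ^ 2 - y1 ^ 2 * x2 * y2,
     y1 * z1 * y2 ^ 2 - a * x1 ^ 2 * x2 * z2,
     a * x1 * y1 * x2 ^ 2 - z1 ^ 2 * y2 * z2]]

/-- Each of the addition laws `s_0, s_1, s_2` maps pairs of points of the twisted
Hessian curve to points satisfying the twisted Hessian equation. -/
theorem hessian_addition_laws_on_curve {k : Type*} [Field k] (a d : k)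
    (x1 y1 z1 x2 y2 z2 : k)
    (hP0 : ¬(x1 = 0 ∧ y1 = 0 ∧ z1 = 0)) (hP : hessianEq a d x1 y1 z1)
    (hQ0 : ¬(x2 = 0 ∧ y2 = 0 ∧ z2 = 0)) (hQ : hessianEq a d x2 y2 z2) :
    ∀ i : Fin 3,
      hessianEq a d (hessianLaw a x1 y1 z1 x2 y2 z2 i 0)
        (hessianLaw a x1 y1 z1 x2 y2 z2 i 1)
        (hessianLaw a x1 y1 z1 x2 y2 z2 i 2) := by
  simp only [hessianEq] at hP hQ ⊢
  intro i
  fin_cases i <;>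
    simp only [hessianLaw, Matrix.cons_val_zero, Matrix.cons_val_one, Matrix.head_cons,
      Matrix.cons_val_two, Matrix.tail_cons, Matrix.cons_val', Matrix.empty_val',
      Matrix.cons_val_fin_one, Fin.mk_zero, Fin.mk_one, Fin.reduceFinMk, Matrix.vecHead]
  · linear_combination ((-1)*z1^3*x2^3*z2^3 + 1*y1^3*x2^3*z2^3 + (-3)*x1*y1*z1*x2^2*y2^2*z2^2 + (-1)*x1^3*z2^6 + 1*d*z1^3*x2^4*y2*z2 + 1*d*x1^3*x2*y2*z2^4 + (-1)*a*z1^3*x2^6 + (-1)*a*x1^3*x2^3*z2^3) * hP + (1*z1^6*x2^3 + 3*x1^2*y1^2*z1^2*x2*y2*z2 + 1*x1^3*z1^3*z2^3 + (-1)*x1^3*z1^3*y2^3 + (-1)*d*x1*y1*z1^4*x2^3 + (-1)*d*x1^4*y1*z1*z2^3 + 1*a*x1^3*z1^3*x2^3 + 1*a*x1^6*z2^3) * hQ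
  · linear_combination (1*z1^3*z2^6 + 1*z1^3*y2^3*z2^3 + (-1)*y1^3*y2^3*z2^3 + (-1)*d*z1^3*x2*y2*z2^4 + 3*a*x1*y1*z1*x2^2*y2^2*z2^2 + 1*a*x1^3*y2^3*z2^3 + 1*a*x1^3*y2^6 + (-1)*a*d*x1^3*x2*y2^4*z2) * hP + ((-1)*z1^6*z2^3 + 1*d*x1*y1*z1^4*z2^3 + (-3)*a*x1^2*y1^2*z1^2*x2*y2*z2 + (-1)*a*x1^3*z1^3*z2^3 + (-1)*a*x1^3*z1^3*y2^3 + 1*a*d*x1^4*y1*z1*y2^3 + 1*a^2*x1^3*z1^3*x2^3 + (-1)*a^2*x1^6*y2^3) * hQ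
  · linear_combination (1*z1^3*y2^6 + (-1)*d*z1^3*x2*y2^4*z2 + 1*a*z1^3*x2^3*y2^3 + (-1)*a*y1^3*x2^3*y2^3 + 3*a*x1*y1*z1*x2^2*y2^2*z2^2 + 1*a^2*x1^3*x2^3*y2^3 + (-1)*a^2*d*x1^3*x2^4*y2*z2 + 1*a^3*x1^3*x2^6) * hP + ((-1)*z1^6*y2^3 + 1*d*x1*y1*z1^4*y2^3 + (-3)*a*x1^2*y1^2*z1^2*x2*y2*z2 + 1*a*x1^3*z1^3*z2^3 + (-1)*a*x1^3*z1^3*y2^3 + (-1)*a^2*x1^3*z1^3*x2^3 + 1*a^2*d*x1^4*y1*z1*x2^3 + (-1)*a^3*x1^6*x2^3) * hQ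
end

section
/- Assume char(k) ≠ 3 and a*(27a − d^3) ≠ 0. For any k-points P and Q of the twisted Hessian curve H and any indices i ≠ j in {0,1,2}, the vectors s_i(P,Q) and s_j(P,Q) in k^3 are proportional; that is, all 2×2 minors vanish: s_i(P,Q)_m * s_j(P,Q)_n = s_i(P,Q)_n * s_j(P,Q)_m for all m, n ∈ {0,1,2}. (The three addition laws define the same rational map, namely the group law, wherever they are nonzero.) -/
/-- For `char k ≠ 3` and a nonsingular twisted Hessian curve, the three addition
laws are pairwise proportional at every pair of points of the curve:
all 2×2 minors vanish. -/
theorem hessian_addition_laws_proportional {k : Type*} [Field k] (a d : k)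
    (hchar : (3 : k) ≠ 0) (hns : a * (27 * a - d ^ 3) ≠ 0)
    (x1 y1 z1 x2 y2 z2 : k)
    (hP0 : ¬(x1 = 0 ∧ y1 = 0 ∧ z1 = 0)) (hP : hessianEq a d x1 y1 z1)
    (hQ0 : ¬(x2 = 0 ∧ y2 = 0 ∧ z2 = 0)) (hQ : hessianEq a d x2 y2 z2) :
    ∀ i j m n : Fin 3, i ≠ j →
      hessianLaw a x1 y1 z1 x2 y2 z2 i m * hessianLaw a x1 y1 z1 x2 y2 z2 j n =
        hessianLaw a x1 y1 z1 x2 y2 z2 i n * hessianLaw a x1 y1 z1 x2 y2 z2 j m := by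
  simp only [hessianEq] at hP hQ
  intro i j m n hij
  fin_cases i <;> fin_cases j <;> fin_cases m <;> fin_cases n <;>
    simp [hessianLaw] <;>
    [exact absurd rfl hij;
     exact absurd rfl hij;
     exact absurd rfl hij;
     exact absurd rfl hij;
     exact absurd rfl hij;
     exact absurd rfl hij;
     linear_combination ((z1*x2^2*y2*z2)) * hP + ((-1*x1*y1*z1^2*x2)) * hQ;
     linear_combination ((-1*x1*x2*y2^2*z2)) * hP + ((x1^2*y1*z1*y2)) * hQ;
     linear_combination (-(z1*x2^2*y2*z2)) * hP + (-(-1*x1*y1*z1^2*x2)) * hQ;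
     linear_combination ((y1*x2*y2*z2^2)) * hP + ((-1*x1*y1^2*z1*z2)) * hQ;
     linear_combination (-(-1*x1*x2*y2^2*z2)) * hP + (-(x1^2*y1*z1*y2)) * hQ;
     linear_combination (-(y1*x2*y2*z2^2)) * hP + (-(-1*x1*y1^2*z1*z2)) * hQ;
     linear_combination ((-1*x1*x2*y2*z2^2)) * hP + ((x1^2*y1*z1*z2)) * hQ;
     linear_combination ((y1*x2^2*y2*z2)) * hP + ((-1*x1*y1^2*z1*x2)) * hQ;
     linear_combination (-(-1*x1*x2*y2*z2^2)) * hP + (-(x1^2*y1*z1*z2)) * hQ;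
     linear_combination ((-1*z1*x2*y2^2*z2)) * hP + ((x1*y1*z1^2*y2)) * hQ;
     linear_combination (-(y1*x2^2*y2*z2)) * hP + (-(-1*x1*y1^2*z1*x2)) * hQ;
     linear_combination (-(-1*z1*x2*y2^2*z2)) * hP + (-(x1*y1*z1^2*y2)) * hQ;
     linear_combination (-(z1*x2^2*y2*z2)) * hP + (-(-1*x1*y1*z1^2*x2)) * hQ;
     linear_combination (-(-1*x1*x2*y2^2*z2)) * hP + (-(x1^2*y1*z1*y2)) * hQ;
     linear_combination ((z1*x2^2*y2*z2)) * hP + ((-1*x1*y1*z1^2*x2)) * hQ;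
     linear_combination (-(y1*x2*y2*z2^2)) * hP + (-(-1*x1*y1^2*z1*z2)) * hQ;
     linear_combination ((-1*x1*x2*y2^2*z2)) * hP + ((x1^2*y1*z1*y2)) * hQ;
     linear_combination ((y1*x2*y2*z2^2)) * hP + ((-1*x1*y1^2*z1*z2)) * hQ;
     exact absurd rfl hij;
     exact absurd rfl hij;
     exact absurd rfl hij;
     exact absurd rfl hij;
     exact absurd rfl hij;
     exact absurd rfl hij;
     linear_combination ((-1*y1*x2*y2^2*z2)) * hP + ((x1*y1^2*z1*y2)) * hQ;
     linear_combination ((z1*x2*y2*z2^2)) * hP + ((-1*x1*y1*z1^2*z2)) * hQ;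
     linear_combination (-(-1*y1*x2*y2^2*z2)) * hP + (-(x1*y1^2*z1*y2)) * hQ;
     linear_combination ((-1*a*x1*x2^2*y2*z2)) * hP + ((a*x1^2*y1*z1*x2)) * hQ;
     linear_combination (-(z1*x2*y2*z2^2)) * hP + (-(-1*x1*y1*z1^2*z2)) * hQ;
     linear_combination (-(-1*a*x1*x2^2*y2*z2)) * hP + (-(a*x1^2*y1*z1*x2)) * hQ;
     linear_combination (-(-1*x1*x2*y2*z2^2)) * hP + (-(x1^2*y1*z1*z2)) * hQ;
     linear_combination (-(y1*x2^2*y2*z2)) * hP + (-(-1*x1*y1^2*z1*x2)) * hQ;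
     linear_combination ((-1*x1*x2*y2*z2^2)) * hP + ((x1^2*y1*z1*z2)) * hQ;
     linear_combination (-(-1*z1*x2*y2^2*z2)) * hP + (-(x1*y1*z1^2*y2)) * hQ;
     linear_combination ((y1*x2^2*y2*z2)) * hP + ((-1*x1*y1^2*z1*x2)) * hQ;
     linear_combination ((-1*z1*x2*y2^2*z2)) * hP + ((x1*y1*z1^2*y2)) * hQ;
     linear_combination (-(-1*y1*x2*y2^2*z2)) * hP + (-(x1*y1^2*z1*y2)) * hQ;
     linear_combination (-(z1*x2*y2*z2^2)) * hP + (-(-1*x1*y1*z1^2*z2)) * hQ;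
     linear_combination ((-1*y1*x2*y2^2*z2)) * hP + ((x1*y1^2*z1*y2)) * hQ;
     linear_combination (-(-1*a*x1*x2^2*y2*z2)) * hP + (-(a*x1^2*y1*z1*x2)) * hQ;
     linear_combination ((z1*x2*y2*z2^2)) * hP + ((-1*x1*y1*z1^2*z2)) * hQ;
     linear_combination ((-1*a*x1*x2^2*y2*z2)) * hP + ((a*x1^2*y1*z1*x2)) * hQ;
     exact absurd rfl hij;
     exact absurd rfl hij;
     exact absurd rfl hij;
     exact absurd rfl hij;
     exact absurd rfl hij;
     exact absurd rfl hij]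
end

section
/- For any k-points P and Q of the Jacobi model J, each of the 4-tuples s_0(P,Q), s_1(P,Q), s_2(P,Q), s_3(P,Q) again satisfies the three quadric equations of J; i.e. writing (z0,z1,z2,z3) = s_i(P,Q) one has a*z0^2 + z1^2 = z2^2, b*z0^2 + z2^2 = z3^2, and c*z0^2 + z3^2 = z1^2 for i = 0, 1, 2, 3. -/
/-- The three quadric equations of the Jacobi model `J_(a,b)` (with `c = -a-b`):
`a*z0^2 + z1^2 = z2^2`, `b*z0^2 + z2^2 = z3^2`, `c*z0^2 + z3^2 = z1^2`. -/
def onJacobi {k : Type*} [Field k] (a b z0 z1 z2 z3 : k) : Prop :=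
  a * z0 ^ 2 + z1 ^ 2 = z2 ^ 2 ∧
  b * z0 ^ 2 + z2 ^ 2 = z3 ^ 2 ∧
  (-a - b) * z0 ^ 2 + z3 ^ 2 = z1 ^ 2

/-- The four bidegree (2,2) addition laws `s_0, s_1, s_2, s_3` on the Jacobi
model, as a `Fin 4`-indexed family of coordinate 4-tuples. -/
def jacobiLaw {k : Type*} [Field k] (a b x0 x1 x2 x3 y0 y1 y2 y3 : k) :
    Fin 4 → Fin 4 → k :=
  ![![x0 ^ 2 * y1 ^ 2 - x1 ^ 2 * y0 ^ 2,
     x0 * x1 * y2 * y3 - x2 * x3 * y0 * y1,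
     x0 * x2 * y1 * y3 - x1 * x3 * y0 * y2,
     x0 * x3 * y1 * y2 - x1 * x2 * y0 * y3],
    ![x0 * x2 * y1 * y3 + x1 * x3 * y0 * y2,
     -(a * x0 * x3 * y0 * y3) + x1 * x2 * y1 * y2,
     a * b * x0 ^ 2 * y0 ^ 2 + x2 ^ 2 * y2 ^ 2,
     b * x0 * x1 * y0 * y1 + x2 * x3 * y2 * y3],
    ![x0 * x1 * y2 * y3 + x2 * x3 * y0 * y1,
     a * (-a - b) * x0 ^ 2 * y0 ^ 2 + x1 ^ 2 * y1 ^ 2,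
     a * x0 * x3 * y0 * y3 + x1 * x2 * y1 * y2,
     -((-a - b) * x0 * x2 * y0 * y2) + x1 * x3 * y1 * y3],
    ![a * (x0 * x3 * y1 * y2 + x1 * x2 * y0 * y3),
     a * ((-a - b) * x0 * x2 * y0 * y2 + x1 * x3 * y1 * y3),
     a * (-(b * x0 * x1 * y0 * y1) + x2 * x3 * y2 * y3),
     -(b * x1 ^ 2 * y1 ^ 2) - (-a - b) * x2 ^ 2 * y2 ^ 2]]

/-- Each of the four addition laws maps pairs of points of the Jacobi model to
tuples satisfying the three quadric equations. -/
theorem jacobi_addition_laws_on_curve {k : Type*} [Field k] (a b : k)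
    (hchar : (2 : k) ≠ 0)
    (x0 x1 x2 x3 y0 y1 y2 y3 : k)
    (hP0 : ¬(x0 = 0 ∧ x1 = 0 ∧ x2 = 0 ∧ x3 = 0))
    (hP : onJacobi a b x0 x1 x2 x3)
    (hQ0 : ¬(y0 = 0 ∧ y1 = 0 ∧ y2 = 0 ∧ y3 = 0))
    (hQ : onJacobi a b y0 y1 y2 y3) :
    ∀ i : Fin 4,
      onJacobi a b (jacobiLaw a b x0 x1 x2 x3 y0 y1 y2 y3 i 0)
        (jacobiLaw a b x0 x1 x2 x3 y0 y1 y2 y3 i 1)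
        (jacobiLaw a b x0 x1 x2 x3 y0 y1 y2 y3 i 2)
        (jacobiLaw a b x0 x1 x2 x3 y0 y1 y2 y3 i 3) := by
  have h0 : onJacobi a b (x0 ^ 2 * y1 ^ 2 - x1 ^ 2 * y0 ^ 2) (x0 * x1 * y2 * y3 - x2 * x3 * y0 * y1) (x0 * x2 * y1 * y3 - x1 * x3 * y0 * y2) (x0 * x3 * y1 * y2 - x1 * x2 * y0 * y3) := by
    refine ⟨?_, ?_, ?_⟩
    · linear_combination (- x2^2*y0^2*y1^2 + x1^2*y0^2*y2^2 - x1^2*y0^2*y1^2 + x0^2*y1^2*y3^2 - b*x0^2*y0^2*y1^2 - a*x0^2*y0^2*y1^2) * hP.1 + (- x2^2*y0^2*y1^2 + x1^2*y0^2*y2^2) * hP.2.1 + (x1^4*y0^2 - x0^2*x1^2*y2^2 + a*x0^4*y1^2) * hQ.1 + (- x0^2*x1^2*y2^2 + x0^2*x1^2*y1^2 + a*x0^4*y1^2) * hQ.2.1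
    · linear_combination (x1^2*y0^2*y3^2 - x1^2*y0^2*y2^2 - x0^2*y1^2*y3^2 + x0^2*y1^2*y2^2) * hP.1 + (- x1^2*y0^2*y2^2 + x0^2*y1^2*y2^2) * hP.2.1 + (- b*x0^2*x1^2*y0^2 + b*x0^4*y1^2) * hQ.1 + (x1^4*y0^2 - x0^2*x1^2*y1^2 + a*x0^2*x1^2*y0^2 - a*x0^4*y1^2) * hQ.2.1
    · linear_combination (x2^2*y0^2*y1^2 - x1^2*y0^2*y3^2 + x1^2*y0^2*y1^2 - x0^2*y1^2*y2^2 + b*x0^2*y0^2*y1^2 + a*x0^2*y0^2*y1^2) * hP.1 + (x2^2*y0^2*y1^2 - x0^2*y1^2*y2^2) * hP.2.1 + (- x1^4*y0^2 + x0^2*x1^2*y2^2 + b*x0^2*x1^2*y0^2 - b*x0^4*y1^2 - a*x0^4*y1^2) * hQ.1 + (- x1^4*y0^2 + x0^2*x1^2*y2^2 - a*x0^2*x1^2*y0^2) * hQ.2.1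
  have h1 : onJacobi a b (x0 * x2 * y1 * y3 + x1 * x3 * y0 * y2) (-(a * x0 * x3 * y0 * y3) + x1 * x2 * y1 * y2) (a * b * x0 ^ 2 * y0 ^ 2 + x2 ^ 2 * y2 ^ 2) (b * x0 * x1 * y0 * y1 + x2 * x3 * y2 * y3) := by
    refine ⟨?_, ?_, ?_⟩
    · linear_combination (x2^2*y2^4 + x1^2*y2^4 - x1^2*y1^2*y2^2 - a*x1^2*y0^2*y2^2 + a*x0^2*y2^4 - a*x0^2*y1^2*y3^2 + (2)*a*b*x0^2*y0^2*y2^2 - a^2*x0^2*y0^2*y3^2) * hP.1 + (- a*x1^2*y0^2*y2^2 - a^2*x0^2*y0^2*y3^2) * hP.2.1 + (x1^4*y2^2 + (2)*a*x0^2*x1^2*y2^2 + a*b*x0^2*x1^2*y0^2 + a^2*x0^4*y2^2 + a^2*b*x0^4*y0^2) * hQ.1 + (- a*x0^2*x1^2*y1^2 - a^2*x0^2*x1^2*y0^2 - a^2*x0^4*y1^2 - a^2*b*x0^4*y0^2 - a^3*x0^4*y0^2) * hQ.2.1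
    · linear_combination (x2^2*y2^2*y3^2 - x2^2*y2^4 + x1^2*y2^2*y3^2 - x1^2*y2^4 - b*x1^2*y0^2*y2^2 + b*x0^2*y2^2*y3^2 - b*x0^2*y1^2*y3^2 + a*x0^2*y2^2*y3^2 - a*x0^2*y2^4 - (2)*a*b*x0^2*y0^2*y2^2) * hP.1 + (x2^2*y2^2*y3^2 - b*x1^2*y0^2*y2^2) * hP.2.1 + (b*x0^2*x1^2*y2^2 + a*b*x0^4*y2^2 + a*b^2*x0^4*y0^2) * hQ.1 + (x1^4*y2^2 + b*x0^2*x1^2*y2^2 - b*x0^2*x1^2*y1^2 + (2)*a*x0^2*x1^2*y2^2 + a*b*x0^4*y2^2 - a*b*x0^4*y1^2 + a^2*x0^4*y2^2) * hQ.2.1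
    · linear_combination (- x2^2*y2^2*y3^2 - x1^2*y2^2*y3^2 + x1^2*y1^2*y2^2 + b*x1^2*y0^2*y2^2 - b*x0^2*y2^2*y3^2 + b*x0^2*y1^2*y3^2 + a*x1^2*y0^2*y2^2 - a*x0^2*y2^2*y3^2 + a*x0^2*y1^2*y3^2 + a^2*x0^2*y0^2*y3^2) * hP.1 + (- x2^2*y2^2*y3^2 + b*x1^2*y0^2*y2^2 + a*x1^2*y0^2*y2^2 + a^2*x0^2*y0^2*y3^2) * hP.2.1 + (- x1^4*y2^2 - b*x0^2*x1^2*y2^2 - (2)*a*x0^2*x1^2*y2^2 - a*b*x0^2*x1^2*y0^2 - a*b*x0^4*y2^2 - a*b^2*x0^4*y0^2 - a^2*x0^4*y2^2 - a^2*b*x0^4*y0^2) * hQ.1 + (- x1^4*y2^2 - b*x0^2*x1^2*y2^2 + b*x0^2*x1^2*y1^2 - (2)*a*x0^2*x1^2*y2^2 + a*x0^2*x1^2*y1^2 - a*b*x0^4*y2^2 + a*b*x0^4*y1^2 + a^2*x0^2*x1^2*y0^2 - a^2*x0^4*y2^2 + a^2*x0^4*y1^2 + a^2*b*x0^4*y0^2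 + a^3*x0^4*y0^2) * hQ.2.1
  have h2 : onJacobi a b (x0 * x1 * y2 * y3 + x2 * x3 * y0 * y1) (a * (-a - b) * x0 ^ 2 * y0 ^ 2 + x1 ^ 2 * y1 ^ 2) (a * x0 * x3 * y0 * y3 + x1 * x2 * y1 * y2) (-((-a - b) * x0 * x2 * y0 * y2) + x1 * x3 * y1 * y3) := by
    refine ⟨?_, ?_, ?_⟩
    · linear_combination (x1^2*y1^2*y2^2 - a*x2^2*y0^2*y1^2 - a*x1^2*y0^2*y1^2 - a*b*x0^2*y0^2*y1^2 + a^2*x0^2*y0^2*y3^2 - a^2*x0^2*y0^2*y1^2) * hP.1 + (- a*x2^2*y0^2*y1^2 + a^2*x0^2*y0^2*y3^2) * hP.2.1 + (x1^4*y1^2 - a*x0^2*x1^2*y2^2 - a*b*x0^2*x1^2*y0^2 + a^2*b*x0^4*y0^2 + a^3*x0^4*y0^2) * hQ.1 + (- a*x0^2*x1^2*y2^2 + a^2*x0^2*x1^2*y0^2 + a^2*b*x0^4*y0^2 + a^3*x0^4*y0^2) * hQ.2.1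
    · linear_combination (x1^2*y1^2*y3^2 - x1^2*y1^2*y2^2 - b*x2^2*y0^2*y1^2 - b*x1^2*y0^2*y1^2 + b^2*x0^2*y0^2*y2^2 - b^2*x0^2*y0^2*y1^2 + (2)*a*b*x0^2*y0^2*y2^2 - a*b*x0^2*y0^2*y1^2 - a^2*x0^2*y0^2*y3^2 + a^2*x0^2*y0^2*y2^2) * hP.1 + (x1^2*y1^2*y3^2 - b*x2^2*y0^2*y1^2 - a^2*x0^2*y0^2*y3^2) * hP.2.1 + (- b*x0^2*x1^2*y2^2 + a*b*x0^2*x1^2*y0^2 + a*b^2*x0^4*y0^2 + a^2*b*x0^4*y0^2) * hQ.1 + (x1^4*y1^2 - b*x0^2*x1^2*y2^2 + b*x0^2*x1^2*y1^2 + a*x0^2*x1^2*y1^2 - a^2*x0^2*x1^2*y0^2 - a^2*b*x0^4*y0^2 - a^3*x0^4*y0^2) * hQ.2.1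
    · linear_combination (- x1^2*y1^2*y3^2 + b*x2^2*y0^2*y1^2 + b*x1^2*y0^2*y1^2 - b^2*x0^2*y0^2*y2^2 + b^2*x0^2*y0^2*y1^2 + a*x2^2*y0^2*y1^2 + a*x1^2*y0^2*y1^2 - (2)*a*b*x0^2*y0^2*y2^2 + (2)*a*b*x0^2*y0^2*y1^2 - a^2*x0^2*y0^2*y2^2 + a^2*x0^2*y0^2*y1^2) * hP.1 + (- x1^2*y1^2*y3^2 + b*x2^2*y0^2*y1^2 + a*x2^2*y0^2*y1^2) * hP.2.1 + (- x1^4*y1^2 + b*x0^2*x1^2*y2^2 + a*x0^2*x1^2*y2^2 - a*b^2*x0^4*y0^2 - (2)*a^2*b*x0^4*y0^2 - a^3*x0^4*y0^2) * hQ.1 + (- x1^4*y1^2 + b*x0^2*x1^2*y2^2 - b*x0^2*x1^2*y1^2 + a*x0^2*x1^2*y2^2 - a*x0^2*x1^2*y1^2) * hQ.2.1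
  have h3 : onJacobi a b (a * (x0 * x3 * y1 * y2 + x1 * x2 * y0 * y3)) (a * ((-a - b) * x0 * x2 * y0 * y2 + x1 * x3 * y1 * y3)) (a * (-(b * x0 * x1 * y0 * y1) + x2 * x3 * y2 * y3)) (-(b * x1 ^ 2 * y1 ^ 2) - (-a - b) * x2 ^ 2 * y2 ^ 2) := by
    refine ⟨?_, ?_, ?_⟩
    · linear_combination (a^2*x2^2*y2^2*y3^2 + a^2*x1^2*y2^2*y3^2 - a^2*x1^2*y1^2*y3^2 + a^2*b*x0^2*y2^2*y3^2 - a^2*b^2*x0^2*y0^2*y2^2 - a^3*x1^2*y0^2*y3^2 + a^3*x0^2*y2^2*y3^2 - a^3*x0^2*y1^2*y2^2 - (2)*a^3*b*x0^2*y0^2*y2^2 - a^4*x0^2*y0^2*y2^2) * hP.1 + (a^2*x2^2*y2^2*y3^2 - a^2*x1^2*y1^2*y3^2 - a^3*x0^2*y1^2*y2^2) * hP.2.1 + (a^2*x1^4*y2^2 + a^2*b*x1^4*y0^2 + a^2*b*x0^2*x1^2*y2^2 + (2)*a^3*x0^2*x1^2*y2^2 + a^3*b*x0^2*x1^2*y0^2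 + a^3*b*x0^4*y2^2 + a^4*x0^4*y2^2) * hQ.1 + (a^2*x1^4*y2^2 - a^2*x1^4*y1^2 + a^2*b*x0^2*x1^2*y2^2 - a^2*b*x0^2*x1^2*y1^2 - a^3*x1^4*y0^2 + (2)*a^3*x0^2*x1^2*y2^2 - a^3*x0^2*x1^2*y1^2 + a^3*b*x0^4*y2^2 - a^4*x0^2*x1^2*y0^2 + a^4*x0^4*y2^2) * hQ.2.1
    · linear_combination (b^2*x2^2*y2^4 + b^2*x1^2*y2^4 - (2)*b^2*x1^2*y1^2*y2^2 + (2)*a*b*x2^2*y2^4 + (2)*a*b*x1^2*y2^4 - (2)*a*b*x1^2*y1^2*y2^2 + a*b^2*x0^2*y2^4 - a^2*x2^2*y2^2*y3^2 + a^2*x2^2*y2^4 - a^2*x1^2*y2^2*y3^2 + a^2*x1^2*y2^4 - a^2*b*x1^2*y0^2*y3^2 - a^2*b*x0^2*y2^2*y3^2 + (2)*a^2*b*x0^2*y2^4 - a^2*b*x0^2*y1^2*y2^2 - a^3*x0^2*y2^2*y3^2 + a^3*x0^2*y2^4) * hP.1 + (- a^2*x2^2*y2^2*y3^2 - a^2*b*x0^2*y1^2*y2^2)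 * hP.2.1 + (b^2*x1^4*y2^2 - b^2*x1^4*y1^2 + (2)*a*b*x1^4*y2^2 + a*b^2*x1^4*y0^2 + (2)*a*b^2*x0^2*x1^2*y2^2 + (3)*a^2*b*x0^2*x1^2*y2^2 + a^2*b^2*x0^2*x1^2*y0^2 + a^2*b^2*x0^4*y2^2 + a^3*b*x0^4*y2^2) * hQ.1 + (- a^2*x1^4*y2^2 - a^2*b*x1^4*y0^2 - a^2*b*x0^2*x1^2*y2^2 - (2)*a^3*x0^2*x1^2*y2^2 - a^3*b*x0^2*x1^2*y0^2 - a^3*b*x0^4*y2^2 - a^4*x0^4*y2^2) * hQ.2.1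
    · linear_combination (- b^2*x2^2*y2^4 - b^2*x1^2*y2^4 + (2)*b^2*x1^2*y1^2*y2^2 - (2)*a*b*x2^2*y2^4 - (2)*a*b*x1^2*y2^4 + (2)*a*b*x1^2*y1^2*y2^2 - a*b^2*x0^2*y2^4 - a^2*x2^2*y2^4 - a^2*x1^2*y2^4 + a^2*x1^2*y1^2*y3^2 + a^2*b*x1^2*y0^2*y3^2 - (2)*a^2*b*x0^2*y2^4 + a^2*b*x0^2*y1^2*y2^2 + a^2*b^2*x0^2*y0^2*y2^2 + a^3*x1^2*y0^2*y3^2 - a^3*x0^2*y2^4 + a^3*x0^2*y1^2*y2^2 + (2)*a^3*b*x0^2*y0^2*y2^2 + a^4*x0^2*y0^2*y2^2) * hP.1 + (a^2*x1^2*y1^2*y3^2 + a^2*b*x0^2*y1^2*y2^2 + a^3*x0^2*y1^2*y2^2) * hP.2.1 + (- b^2*x1^4*y2^2 + b^2*x1^4*y1^2 - (2)*a*b*x1^4*y2^2 - a*b^2*x1^4*y0^2 - (2)*a*b^2*x0^2*x1^2*y2^2 - a^2*x1^4*y2^2 - a^2*b*x1^4*y0^2 - (4)*a^2*b*x0^2*x1^2*y2^2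 - a^2*b^2*x0^2*x1^2*y0^2 - a^2*b^2*x0^4*y2^2 - (2)*a^3*x0^2*x1^2*y2^2 - a^3*b*x0^2*x1^2*y0^2 - (2)*a^3*b*x0^4*y2^2 - a^4*x0^4*y2^2) * hQ.1 + (a^2*x1^4*y1^2 + a^2*b*x1^4*y0^2 + a^2*b*x0^2*x1^2*y1^2 + a^3*x1^4*y0^2 + a^3*x0^2*x1^2*y1^2 + a^3*b*x0^2*x1^2*y0^2 + a^4*x0^2*x1^2*y0^2) * hQ.2.1
  intro i
  fin_cases i
  · exact h0
  · exact h1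
  · exact h2
  · exact h3
end

section
/- Assume in addition a*b*c ≠ 0. Then for any two distinct indices i ≠ j in {0,1,2,3} and any k-points P, Q of the Jacobi model J, the 4-tuples s_i(P,Q) and s_j(P,Q) are not both zero; that is, any two of the four addition laws s_0, s_1, s_2, s_3 form a geometrically complete set of addition laws (their exceptional sets are disjoint). -/
section Helpers

variable {k : Type*} [Field k]

private lemma sq0 {x : k} (h : x ^ 2 = 0) : x = 0 := sq_eq_zero_iff.mp h

private lemma half {t : k} (h2 : (2 : k) ≠ 0) (h : 2 * t = 0) : t = 0 :=
  (mul_eq_zero.mp h).resolve_left h2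

private lemma mulne {x t : k} (hx : x ≠ 0) (h : x * t = 0) : t = 0 :=
  (mul_eq_zero.mp h).resolve_left hx

private lemma mul4 {x y t : k} (hx : x ≠ 0) (hy : y ≠ 0) (h : x * y * t = 0) : t = 0 := by
  rcases mul_eq_zero.mp h with h' | h'
  · exact absurd h' (mul_ne_zero hx hy)
  · exact h'

private lemma mulsq0 {x y : k} (hx : x ≠ 0) (h : x ^ 2 * y ^ 2 = 0) : y = 0 := by
  rcases mul_eq_zero.mp h with h' | h'
  · exact absurd (sq0 h') hx
  · exact sq0 h'

private lemma mulsq0' {x y : k} (hy : y ≠ 0) (h : x ^ 2 * y ^ 2 = 0) : x = 0 := by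
  rcases mul_eq_zero.mp h with h' | h'
  · exact sq0 h'
  · exact absurd (sq0 h') hy

private lemma allz {a b y0 y1 y2 y3 : k}
    (e1 : a * y0 ^ 2 + y1 ^ 2 = y2 ^ 2) (e2 : b * y0 ^ 2 + y2 ^ 2 = y3 ^ 2)
    (h0 : y0 = 0) (h : y1 = 0 ∨ y2 = 0 ∨ y3 = 0) :
    y1 = 0 ∧ y2 = 0 ∧ y3 = 0 := by
  rcases h with h | h | h
  · have hh2 : y2 = 0 := sq0 (by linear_combination -e1 + a*y0*h0 + y1*h)
    have hh3 : y3 = 0 := sq0 (by linear_combination -e2 + b*y0*h0 + y2*hh2)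
    exact ⟨h, hh2, hh3⟩
  · have hh1 : y1 = 0 := sq0 (by linear_combination e1 - a*y0*h0 + y2*h)
    have hh3 : y3 = 0 := sq0 (by linear_combination -e2 + b*y0*h0 + y2*h)
    exact ⟨hh1, h, hh3⟩
  · have hh2 : y2 = 0 := sq0 (by linear_combination e2 - b*y0*h0 + y3*h)
    have hh1 : y1 = 0 := sq0 (by linear_combination e1 - a*y0*h0 + y2*hh2)
    exact ⟨hh1, hh2, h⟩

private lemma qzero {a b y0 y1 y2 y3 : k}
    (e1 : a * y0 ^ 2 + y1 ^ 2 = y2 ^ 2) (e2 : b * y0 ^ 2 + y2 ^ 2 = y3 ^ 2)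
    (hQ0 : ¬(y0 = 0 ∧ y1 = 0 ∧ y2 = 0 ∧ y3 = 0))
    (h0 : y0 = 0) (h : y1 = 0 ∨ y2 = 0 ∨ y3 = 0) : False :=
  hQ0 ⟨h0, allz e1 e2 h0 h⟩

private lemma nzs {a b y0 y1 y2 y3 : k}
    (e1 : a * y0 ^ 2 + y1 ^ 2 = y2 ^ 2) (e2 : b * y0 ^ 2 + y2 ^ 2 = y3 ^ 2)
    (hQ0 : ¬(y0 = 0 ∧ y1 = 0 ∧ y2 = 0 ∧ y3 = 0)) (h0 : y0 = 0) :
    y1 ≠ 0 ∧ y2 ≠ 0 ∧ y3 ≠ 0 :=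
  ⟨fun h => qzero e1 e2 hQ0 h0 (Or.inl h),
   fun h => qzero e1 e2 hQ0 h0 (Or.inr (Or.inl h)),
   fun h => qzero e1 e2 hQ0 h0 (Or.inr (Or.inr h))⟩

private lemma q12 {a b y0 y1 y2 y3 : k} (ha : a ≠ 0)
    (e1 : a * y0 ^ 2 + y1 ^ 2 = y2 ^ 2) (e2 : b * y0 ^ 2 + y2 ^ 2 = y3 ^ 2)
    (hQ0 : ¬(y0 = 0 ∧ y1 = 0 ∧ y2 = 0 ∧ y3 = 0))
    (h1 : y1 = 0) (hy2 : y2 = 0) : False := by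
  have h0 : y0 = 0 := by
    have h : a * y0 ^ 2 = 0 := by linear_combination e1 - y1*h1 + y2*hy2
    exact sq0 (mulne ha h)
  exact qzero e1 e2 hQ0 h0 (Or.inl h1)

private lemma q13 {a b y0 y1 y2 y3 : k} (hc : a + b ≠ 0)
    (e1 : a * y0 ^ 2 + y1 ^ 2 = y2 ^ 2) (e2 : b * y0 ^ 2 + y2 ^ 2 = y3 ^ 2)
    (hQ0 : ¬(y0 = 0 ∧ y1 = 0 ∧ y2 = 0 ∧ y3 = 0))
    (h1 : y1 = 0) (h3 : y3 = 0) : False := by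
  have h0 : y0 = 0 := by
    have h : (a + b) * y0 ^ 2 = 0 := by linear_combination e1 + e2 - y1*h1 + y3*h3
    exact sq0 (mulne hc h)
  exact qzero e1 e2 hQ0 h0 (Or.inl h1)

end Helpers

section Pairs

variable {k : Type*} [Field k]

private lemma pair01 {a b x0 x1 x2 x3 y0 y1 y2 y3 : k}
    (ha : a ≠ 0) (hb : b ≠ 0) (hc : a + b ≠ 0) (h2 : (2 : k) ≠ 0)
    (ex1 : a * x0 ^ 2 + x1 ^ 2 = x2 ^ 2) (ex2 : b * x0 ^ 2 + x2 ^ 2 = x3 ^ 2)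
    (ey1 : a * y0 ^ 2 + y1 ^ 2 = y2 ^ 2) (ey2 : b * y0 ^ 2 + y2 ^ 2 = y3 ^ 2)
    (hP0 : ¬(x0 = 0 ∧ x1 = 0 ∧ x2 = 0 ∧ x3 = 0))
    (hQ0 : ¬(y0 = 0 ∧ y1 = 0 ∧ y2 = 0 ∧ y3 = 0))
    (A : x0 ^ 2 * y1 ^ 2 - x1 ^ 2 * y0 ^ 2 = 0)
    (B : x0 * x1 * y2 * y3 - x2 * x3 * y0 * y1 = 0)
    (C : x0 * x2 * y1 * y3 - x1 * x3 * y0 * y2 = 0)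
    (D : x0 * x3 * y1 * y2 - x1 * x2 * y0 * y3 = 0)
    (E : x0 * x2 * y1 * y3 + x1 * x3 * y0 * y2 = 0)
    (F : -(a * x0 * x3 * y0 * y3) + x1 * x2 * y1 * y2 = 0)
    (G : a * b * x0 ^ 2 * y0 ^ 2 + x2 ^ 2 * y2 ^ 2 = 0)
    (H : b * x0 * x1 * y0 * y1 + x2 * x3 * y2 * y3 = 0) : False := by
  have i1 : x0 * x2 * (y1 * y3) = 0 := half h2 (by linear_combination C + E)
  have i2 : x1 * x3 * (y0 * y2) = 0 := half h2 (by linear_combination E - C)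
  by_cases hx0 : x0 = 0
  · obtain ⟨hx1, hx2, hx3⟩ := nzs ex1 ex2 hP0 hx0
    have hy2 : y2 = 0 := mulsq0 hx2 (by linear_combination G - a*b*x0*y0^2*hx0)
    have hy01 : y0 * y1 = 0 := by
      apply mul4 hx2 hx3
      show x2 * x3 * (y0 * y1) = 0
      linear_combination -B + x1*y2*y3*hx0
    rcases mul_eq_zero.mp hy01 with hy0 | hy1
    · exact qzero ey1 ey2 hQ0 hy0 (Or.inr (Or.inl hy2))
    · exact q12 ha ey1 ey2 hQ0 hy1 hy2
  · by_cases hy0 : y0 = 0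
    · have hy1 : y1 = 0 := mulsq0 hx0 (by linear_combination A + x1^2*y0*hy0)
      exact qzero ey1 ey2 hQ0 hy0 (Or.inl hy1)
    · have key : a * (b * (x0 ^ 2 * y0 ^ 2)) ≠ 0 :=
        mul_ne_zero ha (mul_ne_zero hb
          (mul_ne_zero (pow_ne_zero 2 hx0) (pow_ne_zero 2 hy0)))
      have hx2 : x2 ≠ 0 := fun h => key (by linear_combination G - x2*y2^2*h)
      have hy2 : y2 ≠ 0 := fun h => key (by linear_combination G - x2^2*y2*h)
      have hy13 : y1 * y3 = 0 := mul4 hx0 hx2 i1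
      have hx13 : x1 * x3 = 0 :=
        (mul_eq_zero.mp i2).resolve_right (mul_ne_zero hy0 hy2)
      by_cases hy1 : y1 = 0
      · have hx1 : x1 = 0 := mulsq0' hy0 (by linear_combination -A + x0^2*y1*hy1)
        have hx3y3 : x3 * y3 = 0 := by
          apply mulne hy0; apply mulne hx0; apply mulne ha
          show a * (x0 * (y0 * (x3 * y3))) = 0
          linear_combination -F + x2*y1*y2*hx1
        have hx3 : x3 ≠ 0 := by
          intro h
          have hh : (a + b) * x0 ^ 2 = 0 := by
            linear_combination ex1 + ex2 - x1*hx1 + x3*h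
          exact hx0 (sq0 (mulne hc hh))
        have hy3 : y3 ≠ 0 := by
          intro h
          have hh : (a + b) * y0 ^ 2 = 0 := by
            linear_combination ey1 + ey2 - y1*hy1 + y3*h
          exact hy0 (sq0 (mulne hc hh))
        rcases mul_eq_zero.mp hx3y3 with h | h
        · exact hx3 h
        · exact hy3 h
      · have hy3 : y3 = 0 := mulne hy1 hy13
        have hx1 : x1 ≠ 0 := fun h =>
          hy1 (mulsq0 hx0 (by linear_combination A + y0^2*x1*h))
        have hx3 : x3 = 0 := mulne hx1 hx13
        have hh : x1 * (x2 * (y1 * y2)) = 0 := by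
          linear_combination F + a*x0*y0*y3*hx3
        exact hy2 (mulne hy1 (mulne hx2 (mulne hx1 hh)))

private lemma pair02 {a b x0 x1 x2 x3 y0 y1 y2 y3 : k}
    (ha : a ≠ 0) (hb : b ≠ 0) (hc : a + b ≠ 0) (h2 : (2 : k) ≠ 0)
    (ex1 : a * x0 ^ 2 + x1 ^ 2 = x2 ^ 2) (ex2 : b * x0 ^ 2 + x2 ^ 2 = x3 ^ 2)
    (ey1 : a * y0 ^ 2 + y1 ^ 2 = y2 ^ 2) (ey2 : b * y0 ^ 2 + y2 ^ 2 = y3 ^ 2)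
    (hP0 : ¬(x0 = 0 ∧ x1 = 0 ∧ x2 = 0 ∧ x3 = 0))
    (hQ0 : ¬(y0 = 0 ∧ y1 = 0 ∧ y2 = 0 ∧ y3 = 0))
    (A : x0 ^ 2 * y1 ^ 2 - x1 ^ 2 * y0 ^ 2 = 0)
    (B : x0 * x1 * y2 * y3 - x2 * x3 * y0 * y1 = 0)
    (C : x0 * x2 * y1 * y3 - x1 * x3 * y0 * y2 = 0)
    (D : x0 * x3 * y1 * y2 - x1 * x2 * y0 * y3 = 0)
    (E : x0 * x1 * y2 * y3 + x2 * x3 * y0 * y1 = 0)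
    (F : a * (-a - b) * x0 ^ 2 * y0 ^ 2 + x1 ^ 2 * y1 ^ 2 = 0)
    (G : a * x0 * x3 * y0 * y3 + x1 * x2 * y1 * y2 = 0)
    (H : -((-a - b) * x0 * x2 * y0 * y2) + x1 * x3 * y1 * y3 = 0) : False := by
  have j1 : x0 * x1 * (y2 * y3) = 0 := half h2 (by linear_combination B + E)
  have j2 : x2 * x3 * (y0 * y1) = 0 := half h2 (by linear_combination E - B)
  by_cases hx0 : x0 = 0
  · obtain ⟨hx1, hx2, hx3⟩ := nzs ex1 ex2 hP0 hx0
    have hy1 : y1 = 0 := mulsq0 hx1 (by linear_combination F - a*(-a-b)*x0*y0^2*hx0)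
    have hy0 : y0 = 0 := mulsq0 hx1 (by linear_combination -A + x0*y1^2*hx0)
    exact qzero ey1 ey2 hQ0 hy0 (Or.inl hy1)
  · by_cases hy0 : y0 = 0
    · have hy1 : y1 = 0 := mulsq0 hx0 (by linear_combination A + x1^2*y0*hy0)
      exact qzero ey1 ey2 hQ0 hy0 (Or.inl hy1)
    · have key : a * ((a + b) * (x0 ^ 2 * y0 ^ 2)) ≠ 0 :=
        mul_ne_zero ha (mul_ne_zero hc
          (mul_ne_zero (pow_ne_zero 2 hx0) (pow_ne_zero 2 hy0)))
      have hx1 : x1 ≠ 0 := fun h => key (by linear_combination -F + x1*y1^2*h)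
      have hy1 : y1 ≠ 0 := fun h => key (by linear_combination -F + x1^2*y1*h)
      have hx23 : x2 * x3 = 0 :=
        (mul_eq_zero.mp j2).resolve_right (mul_ne_zero hy0 hy1)
      rcases mul_eq_zero.mp hx23 with hx2e | hx3e
      · have hx3 : x3 ≠ 0 := by
          intro h
          have hh : b * x0 ^ 2 = 0 := by linear_combination ex2 - x2*hx2e + x3*h
          exact hx0 (sq0 (mulne hb hh))
        have hy2 : y2 = 0 := by
          apply mulne hy1; apply mulne hx3; apply mulne hx0
          show x0 * (x3 * (y1 * y2)) = 0
          linear_combination D + x1*y0*y3*hx2e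
        have hy3 : y3 ≠ 0 := by
          intro h
          have hh : b * y0 ^ 2 = 0 := by linear_combination ey2 - y2*hy2 + y3*h
          exact hy0 (sq0 (mulne hb hh))
        have hh : x1 * (x3 * (y1 * y3)) = 0 := by
          linear_combination H + (-a-b)*x0*y0*y2*hx2e
        exact hy3 (mulne hy1 (mulne hx3 (mulne hx1 hh)))
      · have hx2 : x2 ≠ 0 := by
          intro h
          have hh : b * x0 ^ 2 = 0 := by linear_combination ex2 - x2*h + x3*hx3e
          exact hx0 (sq0 (mulne hb hh))
        have hy3 : y3 = 0 := by
          apply mulne hy1; apply mulne hx2; apply mulne hx0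
          show x0 * (x2 * (y1 * y3)) = 0
          linear_combination C + x1*y0*y2*hx3e
        have hy2 : y2 ≠ 0 := by
          intro h
          have hh : b * y0 ^ 2 = 0 := by linear_combination ey2 - y2*h + y3*hy3
          exact hy0 (sq0 (mulne hb hh))
        have hh : x1 * (x2 * (y1 * y2)) = 0 := by
          linear_combination G - a*x0*y0*y3*hx3e
        exact hy2 (mulne hy1 (mulne hx2 (mulne hx1 hh)))

private lemma pair03 {a b x0 x1 x2 x3 y0 y1 y2 y3 : k}
    (ha : a ≠ 0) (hb : b ≠ 0) (hc : a + b ≠ 0) (h2 : (2 : k) ≠ 0)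
    (ex1 : a * x0 ^ 2 + x1 ^ 2 = x2 ^ 2) (ex2 : b * x0 ^ 2 + x2 ^ 2 = x3 ^ 2)
    (ey1 : a * y0 ^ 2 + y1 ^ 2 = y2 ^ 2) (ey2 : b * y0 ^ 2 + y2 ^ 2 = y3 ^ 2)
    (hP0 : ¬(x0 = 0 ∧ x1 = 0 ∧ x2 = 0 ∧ x3 = 0))
    (hQ0 : ¬(y0 = 0 ∧ y1 = 0 ∧ y2 = 0 ∧ y3 = 0))
    (A : x0 ^ 2 * y1 ^ 2 - x1 ^ 2 * y0 ^ 2 = 0)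
    (B : x0 * x1 * y2 * y3 - x2 * x3 * y0 * y1 = 0)
    (C : x0 * x2 * y1 * y3 - x1 * x3 * y0 * y2 = 0)
    (D : x0 * x3 * y1 * y2 - x1 * x2 * y0 * y3 = 0)
    (E : a * (x0 * x3 * y1 * y2 + x1 * x2 * y0 * y3) = 0)
    (F : a * ((-a - b) * x0 * x2 * y0 * y2 + x1 * x3 * y1 * y3) = 0)
    (G : a * (-(b * x0 * x1 * y0 * y1) + x2 * x3 * y2 * y3) = 0)
    (D3 : -(b * x1 ^ 2 * y1 ^ 2) - (-a - b) * x2 ^ 2 * y2 ^ 2 = 0) : False := by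
  have hE : x0 * x3 * y1 * y2 + x1 * x2 * y0 * y3 = 0 := mulne ha E
  have hF : (-a - b) * x0 * x2 * y0 * y2 + x1 * x3 * y1 * y3 = 0 := mulne ha F
  have hG : -(b * x0 * x1 * y0 * y1) + x2 * x3 * y2 * y3 = 0 := mulne ha G
  have k1 : x0 * (x3 * (y1 * y2)) = 0 := half h2 (by linear_combination D + hE)
  have k2 : x1 * x2 * (y0 * y3) = 0 := half h2 (by linear_combination hE - D)
  by_cases hx0 : x0 = 0
  · obtain ⟨hx1, hx2, hx3⟩ := nzs ex1 ex2 hP0 hx0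
    have hy03 : y0 * y3 = 0 := mul4 hx1 hx2 k2
    have hy13 : y1 * y3 = 0 := by
      apply mul4 hx1 hx3
      show x1 * x3 * (y1 * y3) = 0
      linear_combination hF - (-a-b)*x2*y0*y2*hx0
    by_cases hy3 : y3 = 0
    · have hy01 : y0 * y1 = 0 := by
        apply mul4 hx2 hx3
        show x2 * x3 * (y0 * y1) = 0
        linear_combination -B + x1*y2*y3*hx0
      rcases mul_eq_zero.mp hy01 with hy0 | hy1
      · exact qzero ey1 ey2 hQ0 hy0 (Or.inr (Or.inr hy3))
      · exact q13 hc ey1 ey2 hQ0 hy1 hy3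
    · have hy0 : y0 = 0 := (mul_eq_zero.mp hy03).resolve_right hy3
      have hy1 : y1 = 0 := (mul_eq_zero.mp hy13).resolve_right hy3
      exact qzero ey1 ey2 hQ0 hy0 (Or.inl hy1)
  · by_cases hy0 : y0 = 0
    · have hy1 : y1 = 0 := mulsq0 hx0 (by linear_combination A + x1^2*y0*hy0)
      exact qzero ey1 ey2 hQ0 hy0 (Or.inl hy1)
    · have k1' : x3 * (y1 * y2) = 0 := mulne hx0 k1
      by_cases hy1 : y1 = 0
      · have hx1 : x1 = 0 := mulsq0' hy0 (by linear_combination -A + x0^2*y1*hy1)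
        have hh : (a + b) * (x2 ^ 2 * y2 ^ 2) = 0 := by
          linear_combination D3 + b*x1*y1^2*hx1
        rcases mul_eq_zero.mp (mulne hc hh) with h | h
        · exact q12 ha ex1 ex2 hP0 hx1 (sq0 h)
        · exact q12 ha ey1 ey2 hQ0 hy1 (sq0 h)
      · have hx1 : x1 ≠ 0 := fun h =>
          hy1 (mulsq0 hx0 (by linear_combination A + y0^2*x1*h))
        by_cases hx2e : x2 = 0
        · have hx3 : x3 ≠ 0 := by
            intro h
            have hh : b * x0 ^ 2 = 0 := by linear_combination ex2 - x2*hx2e + x3*h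
            exact hx0 (sq0 (mulne hb hh))
          have hy2 : y2 = 0 := (mul_eq_zero.mp (mulne hx3 k1')).resolve_left hy1
          have hh : b * (x1 ^ 2 * y1 ^ 2) = 0 := by
            linear_combination -D3 + (a+b)*x2*y2^2*hx2e
          exact hy1 (mulsq0 hx1 (mulne hb hh))
        · have hy3 : y3 = 0 := mulne hy0 (mul4 hx1 hx2e k2)
          have hy2 : y2 ≠ 0 := by
            intro h
            have hh : b * y0 ^ 2 = 0 := by linear_combination ey2 - y2*h + y3*hy3
            exact hy0 (sq0 (mulne hb hh))
          have hx3 : x3 = 0 :=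
            (mul_eq_zero.mp k1').resolve_right (mul_ne_zero hy1 hy2)
          have hx2sq : x2 ^ 2 = -(b * x0 ^ 2) := by linear_combination ex2 + x3*hx3
          have hx1sq : x1 ^ 2 = -((a + b) * x0 ^ 2) := by linear_combination ex1 + hx2sq
          have hy2sq : y2 ^ 2 = -(b * y0 ^ 2) := by linear_combination ey2 + y3*hy3
          have hy1sq : y1 ^ 2 = -((a + b) * y0 ^ 2) := by linear_combination ey1 + hy2sq
          have final : a * (b * ((a + b) * (x0 ^ 2 * y0 ^ 2))) = 0 := by
            linear_combination -D3 - b*y1^2*hx1sq + b*(a+b)*x0^2*hy1sq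
              + (a+b)*y2^2*hx2sq - (a+b)*b*x0^2*hy2sq
          exact (mul_ne_zero (pow_ne_zero 2 hx0) (pow_ne_zero 2 hy0))
            (mulne hc (mulne hb (mulne ha final)))

private lemma pair12 {a b x0 x1 x2 x3 y0 y1 y2 y3 : k}
    (ha : a ≠ 0) (hb : b ≠ 0) (hc : a + b ≠ 0) (h2 : (2 : k) ≠ 0)
    (ex1 : a * x0 ^ 2 + x1 ^ 2 = x2 ^ 2) (ex2 : b * x0 ^ 2 + x2 ^ 2 = x3 ^ 2)
    (ey1 : a * y0 ^ 2 + y1 ^ 2 = y2 ^ 2) (ey2 : b * y0 ^ 2 + y2 ^ 2 = y3 ^ 2)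
    (hP0 : ¬(x0 = 0 ∧ x1 = 0 ∧ x2 = 0 ∧ x3 = 0))
    (hQ0 : ¬(y0 = 0 ∧ y1 = 0 ∧ y2 = 0 ∧ y3 = 0))
    (A : x0 * x2 * y1 * y3 + x1 * x3 * y0 * y2 = 0)
    (B : -(a * x0 * x3 * y0 * y3) + x1 * x2 * y1 * y2 = 0)
    (C : a * b * x0 ^ 2 * y0 ^ 2 + x2 ^ 2 * y2 ^ 2 = 0)
    (D : b * x0 * x1 * y0 * y1 + x2 * x3 * y2 * y3 = 0)
    (E : x0 * x1 * y2 * y3 + x2 * x3 * y0 * y1 = 0)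
    (F : a * (-a - b) * x0 ^ 2 * y0 ^ 2 + x1 ^ 2 * y1 ^ 2 = 0)
    (G : a * x0 * x3 * y0 * y3 + x1 * x2 * y1 * y2 = 0)
    (H : -((-a - b) * x0 * x2 * y0 * y2) + x1 * x3 * y1 * y3 = 0) : False := by
  have m1 : x1 * x2 * (y1 * y2) = 0 := half h2 (by linear_combination B + G)
  by_cases hx0 : x0 = 0
  · obtain ⟨hx1, hx2, hx3⟩ := nzs ex1 ex2 hP0 hx0
    have hy2 : y2 = 0 := mulsq0 hx2 (by linear_combination C - a*b*x0*y0^2*hx0)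
    have hy1 : y1 = 0 := mulsq0 hx1 (by linear_combination F - a*(-a-b)*x0*y0^2*hx0)
    exact q12 ha ey1 ey2 hQ0 hy1 hy2
  · by_cases hy0 : y0 = 0
    · obtain ⟨hy1, hy2, hy3⟩ := nzs ey1 ey2 hQ0 hy0
      have hx2 : x2 = 0 := mulsq0' hy2 (by linear_combination C - a*b*x0^2*y0*hy0)
      have hx1 : x1 = 0 := mulsq0' hy1 (by linear_combination F - a*(-a-b)*x0^2*y0*hy0)
      exact q12 ha ex1 ex2 hP0 hx1 hx2
    · have keyb : a * (b * (x0 ^ 2 * y0 ^ 2)) ≠ 0 :=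
        mul_ne_zero ha (mul_ne_zero hb
          (mul_ne_zero (pow_ne_zero 2 hx0) (pow_ne_zero 2 hy0)))
      have keyc : a * ((a + b) * (x0 ^ 2 * y0 ^ 2)) ≠ 0 :=
        mul_ne_zero ha (mul_ne_zero hc
          (mul_ne_zero (pow_ne_zero 2 hx0) (pow_ne_zero 2 hy0)))
      have hx2 : x2 ≠ 0 := fun h => keyb (by linear_combination C - x2*y2^2*h)
      have hy2 : y2 ≠ 0 := fun h => keyb (by linear_combination C - x2^2*y2*h)
      have hx1 : x1 ≠ 0 := fun h => keyc (by linear_combination -F + x1*y1^2*h)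
      have hy1 : y1 ≠ 0 := fun h => keyc (by linear_combination -F + x1^2*y1*h)
      exact hy2 (mulne hy1 (mul4 hx1 hx2 m1))

private lemma pair13 {a b x0 x1 x2 x3 y0 y1 y2 y3 : k}
    (ha : a ≠ 0) (hb : b ≠ 0) (hc : a + b ≠ 0) (h2 : (2 : k) ≠ 0)
    (ex1 : a * x0 ^ 2 + x1 ^ 2 = x2 ^ 2) (ex2 : b * x0 ^ 2 + x2 ^ 2 = x3 ^ 2)
    (ey1 : a * y0 ^ 2 + y1 ^ 2 = y2 ^ 2) (ey2 : b * y0 ^ 2 + y2 ^ 2 = y3 ^ 2)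
    (hP0 : ¬(x0 = 0 ∧ x1 = 0 ∧ x2 = 0 ∧ x3 = 0))
    (hQ0 : ¬(y0 = 0 ∧ y1 = 0 ∧ y2 = 0 ∧ y3 = 0))
    (A : x0 * x2 * y1 * y3 + x1 * x3 * y0 * y2 = 0)
    (B : -(a * x0 * x3 * y0 * y3) + x1 * x2 * y1 * y2 = 0)
    (C : a * b * x0 ^ 2 * y0 ^ 2 + x2 ^ 2 * y2 ^ 2 = 0)
    (D : b * x0 * x1 * y0 * y1 + x2 * x3 * y2 * y3 = 0)
    (E : a * (x0 * x3 * y1 * y2 + x1 * x2 * y0 * y3) = 0)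
    (F : a * ((-a - b) * x0 * x2 * y0 * y2 + x1 * x3 * y1 * y3) = 0)
    (G : a * (-(b * x0 * x1 * y0 * y1) + x2 * x3 * y2 * y3) = 0)
    (D3 : -(b * x1 ^ 2 * y1 ^ 2) - (-a - b) * x2 ^ 2 * y2 ^ 2 = 0) : False := by
  have hG : -(b * x0 * x1 * y0 * y1) + x2 * x3 * y2 * y3 = 0 := mulne ha G
  have n2 : x0 * (y0 * (x1 * y1)) = 0 :=
    mulne hb (half h2 (by linear_combination D - hG))
  by_cases hx0 : x0 = 0
  · obtain ⟨hx1, hx2, hx3⟩ := nzs ex1 ex2 hP0 hx0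
    have hy2 : y2 = 0 := mulsq0 hx2 (by linear_combination C - a*b*x0*y0^2*hx0)
    have hh : b * (x1 ^ 2 * y1 ^ 2) = 0 := by
      linear_combination -D3 + (a+b)*x2^2*y2*hy2
    have hy1 : y1 = 0 := mulsq0 hx1 (mulne hb hh)
    exact q12 ha ey1 ey2 hQ0 hy1 hy2
  · by_cases hy0 : y0 = 0
    · obtain ⟨hy1, hy2, hy3⟩ := nzs ey1 ey2 hQ0 hy0
      have hx2 : x2 = 0 := mulsq0' hy2 (by linear_combination C - a*b*x0^2*y0*hy0)
      have hh : b * (x1 ^ 2 * y1 ^ 2) = 0 := by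
        linear_combination -D3 + (a+b)*x2*y2^2*hx2
      have hx1 : x1 = 0 := mulsq0' hy1 (mulne hb hh)
      exact q12 ha ex1 ex2 hP0 hx1 hx2
    · have keyb : a * (b * (x0 ^ 2 * y0 ^ 2)) ≠ 0 :=
        mul_ne_zero ha (mul_ne_zero hb
          (mul_ne_zero (pow_ne_zero 2 hx0) (pow_ne_zero 2 hy0)))
      have hx2 : x2 ≠ 0 := fun h => keyb (by linear_combination C - x2*y2^2*h)
      have hy2 : y2 ≠ 0 := fun h => keyb (by linear_combination C - x2^2*y2*h)
      have hx1y1 : x1 * y1 = 0 := mulne hy0 (mulne hx0 n2)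
      have hh : (a + b) * (x2 ^ 2 * y2 ^ 2) = 0 := by
        linear_combination D3 + b*x1*y1*hx1y1
      exact hy2 (mulsq0 hx2 (mulne hc hh))

private lemma pair23 {a b x0 x1 x2 x3 y0 y1 y2 y3 : k}
    (ha : a ≠ 0) (hb : b ≠ 0) (hc : a + b ≠ 0) (h2 : (2 : k) ≠ 0)
    (ex1 : a * x0 ^ 2 + x1 ^ 2 = x2 ^ 2) (ex2 : b * x0 ^ 2 + x2 ^ 2 = x3 ^ 2)
    (ey1 : a * y0 ^ 2 + y1 ^ 2 = y2 ^ 2) (ey2 : b * y0 ^ 2 + y2 ^ 2 = y3 ^ 2)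
    (hP0 : ¬(x0 = 0 ∧ x1 = 0 ∧ x2 = 0 ∧ x3 = 0))
    (hQ0 : ¬(y0 = 0 ∧ y1 = 0 ∧ y2 = 0 ∧ y3 = 0))
    (A : x0 * x1 * y2 * y3 + x2 * x3 * y0 * y1 = 0)
    (B : a * (-a - b) * x0 ^ 2 * y0 ^ 2 + x1 ^ 2 * y1 ^ 2 = 0)
    (C : a * x0 * x3 * y0 * y3 + x1 * x2 * y1 * y2 = 0)
    (D : -((-a - b) * x0 * x2 * y0 * y2) + x1 * x3 * y1 * y3 = 0)
    (E : a * (x0 * x3 * y1 * y2 + x1 * x2 * y0 * y3) = 0)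
    (F : a * ((-a - b) * x0 * x2 * y0 * y2 + x1 * x3 * y1 * y3) = 0)
    (G : a * (-(b * x0 * x1 * y0 * y1) + x2 * x3 * y2 * y3) = 0)
    (D3 : -(b * x1 ^ 2 * y1 ^ 2) - (-a - b) * x2 ^ 2 * y2 ^ 2 = 0) : False := by
  have hF : (-a - b) * x0 * x2 * y0 * y2 + x1 * x3 * y1 * y3 = 0 := mulne ha F
  have p2 : x0 * (x2 * (y0 * y2)) = 0 := by
    have hh : (a + b) * (2 * (x0 * (x2 * (y0 * y2)))) = 0 := by
      linear_combination D - hF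
    exact half h2 (mulne hc hh)
  by_cases hx0 : x0 = 0
  · obtain ⟨hx1, hx2, hx3⟩ := nzs ex1 ex2 hP0 hx0
    have hy1 : y1 = 0 := mulsq0 hx1 (by linear_combination B - a*(-a-b)*x0*y0^2*hx0)
    have hh : (a + b) * (x2 ^ 2 * y2 ^ 2) = 0 := by
      linear_combination D3 + b*x1^2*y1*hy1
    have hy2 : y2 = 0 := mulsq0 hx2 (mulne hc hh)
    exact q12 ha ey1 ey2 hQ0 hy1 hy2
  · by_cases hy0 : y0 = 0
    · obtain ⟨hy1, hy2, hy3⟩ := nzs ey1 ey2 hQ0 hy0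
      have hx1 : x1 = 0 := mulsq0' hy1 (by linear_combination B - a*(-a-b)*x0^2*y0*hy0)
      have hh : (a + b) * (x2 ^ 2 * y2 ^ 2) = 0 := by
        linear_combination D3 + b*x1*y1^2*hx1
      have hx2 : x2 = 0 := mulsq0' hy2 (mulne hc hh)
      exact q12 ha ex1 ex2 hP0 hx1 hx2
    · have keyc : a * ((a + b) * (x0 ^ 2 * y0 ^ 2)) ≠ 0 :=
        mul_ne_zero ha (mul_ne_zero hc
          (mul_ne_zero (pow_ne_zero 2 hx0) (pow_ne_zero 2 hy0)))
      have hx1 : x1 ≠ 0 := fun h => keyc (by linear_combination -B + x1*y1^2*h)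
      have hy1 : y1 ≠ 0 := fun h => keyc (by linear_combination -B + x1^2*y1*h)
      have keyd : b * (x1 ^ 2 * y1 ^ 2) ≠ 0 :=
        mul_ne_zero hb (mul_ne_zero (pow_ne_zero 2 hx1) (pow_ne_zero 2 hy1))
      have hx2 : x2 ≠ 0 := fun h => keyd (by linear_combination -D3 + (a+b)*x2*y2^2*h)
      have hy2 : y2 ≠ 0 := fun h => keyd (by linear_combination -D3 + (a+b)*x2^2*y2*h)
      exact hy2 (mulne hy0 (mulne hx2 (mulne hx0 p2)))

end Pairs

/-- If `a*b*c ≠ 0`, any two distinct addition laws among `s_0, s_1, s_2, s_3`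
never vanish simultaneously at a pair of points of the Jacobi model:
they form a geometrically complete set. -/
theorem jacobi_addition_laws_complete {k : Type*} [Field k] (a b : k)
    (hchar : (2 : k) ≠ 0) (habc : a * b * (-a - b) ≠ 0)
    (x0 x1 x2 x3 y0 y1 y2 y3 : k)
    (hP0 : ¬(x0 = 0 ∧ x1 = 0 ∧ x2 = 0 ∧ x3 = 0))
    (hP : onJacobi a b x0 x1 x2 x3)
    (hQ0 : ¬(y0 = 0 ∧ y1 = 0 ∧ y2 = 0 ∧ y3 = 0))
    (hQ : onJacobi a b y0 y1 y2 y3) :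
    ∀ i j : Fin 4, i ≠ j →
      ¬((∀ m : Fin 4, jacobiLaw a b x0 x1 x2 x3 y0 y1 y2 y3 i m = 0) ∧
        (∀ m : Fin 4, jacobiLaw a b x0 x1 x2 x3 y0 y1 y2 y3 j m = 0)) := by
  obtain ⟨ex1, ex2, -⟩ := hP
  obtain ⟨ey1, ey2, -⟩ := hQ
  have ha : a ≠ 0 := by intro h; apply habc; rw [h]; ring
  have hb : b ≠ 0 := by intro h; apply habc; rw [h]; ring
  have hc : a + b ≠ 0 := by
    intro h
    apply habc
    have : -a - b = -(a + b) := by ring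
    rw [this, h]; ring
  intro i j hij
  rintro ⟨hi, hj⟩
  have A0 := hi 0; have A1 := hi 1; have A2 := hi 2; have A3 := hi 3
  have B0 := hj 0; have B1 := hj 1; have B2 := hj 2; have B3 := hj 3
  clear hi hj
  fin_cases i <;> fin_cases j <;>
    simp only [jacobiLaw, Fin.isValue, Matrix.cons_val', Matrix.cons_val_zero,
      Matrix.cons_val_one, Matrix.head_cons, Matrix.empty_val',
      Matrix.cons_val_fin_one, Matrix.head_fin_const, Matrix.cons_val_two,
      Matrix.tail_cons, Matrix.cons_val_three] at A0 A1 A2 A3 B0 B1 B2 B3 <;>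
  first
    | exact hij rfl
    | exact pair01 ha hb hc hchar ex1 ex2 ey1 ey2 hP0 hQ0 A0 A1 A2 A3 B0 B1 B2 B3
    | exact pair01 ha hb hc hchar ex1 ex2 ey1 ey2 hP0 hQ0 B0 B1 B2 B3 A0 A1 A2 A3
    | exact pair02 ha hb hc hchar ex1 ex2 ey1 ey2 hP0 hQ0 A0 A1 A2 A3 B0 B1 B2 B3
    | exact pair02 ha hb hc hchar ex1 ex2 ey1 ey2 hP0 hQ0 B0 B1 B2 B3 A0 A1 A2 A3
    | exact pair03 ha hb hc hchar ex1 ex2 ey1 ey2 hP0 hQ0 A0 A1 A2 A3 B0 B1 B2 B3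
    | exact pair03 ha hb hc hchar ex1 ex2 ey1 ey2 hP0 hQ0 B0 B1 B2 B3 A0 A1 A2 A3
    | exact pair12 ha hb hc hchar ex1 ex2 ey1 ey2 hP0 hQ0 A0 A1 A2 A3 B0 B1 B2 B3
    | exact pair12 ha hb hc hchar ex1 ex2 ey1 ey2 hP0 hQ0 B0 B1 B2 B3 A0 A1 A2 A3
    | exact pair13 ha hb hc hchar ex1 ex2 ey1 ey2 hP0 hQ0 A0 A1 A2 A3 B0 B1 B2 B3
    | exact pair13 ha hb hc hchar ex1 ex2 ey1 ey2 hP0 hQ0 B0 B1 B2 B3 A0 A1 A2 A3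
    | exact pair23 ha hb hc hchar ex1 ex2 ey1 ey2 hP0 hQ0 A0 A1 A2 A3 B0 B1 B2 B3
    | exact pair23 ha hb hc hchar ex1 ex2 ey1 ey2 hP0 hQ0 B0 B1 B2 B3 A0 A1 A2 A3
end

section
/- For all k-points P = (x0,x1,x2,x3) and Q = (y0,y1,y2,y3) of E, the following two identities hold: (x0*y3 + x3*y0)*(d*x0*y0 + x3*y3) = (a*x1*y1 + x2*y2)*(x1*y2 + x2*y1), and (x0*y3 − x3*y0)*(d*x0*y0 − x3*y3) = (a*x1*y1 − x2*y2)*(x1*y2 − x2*y1). Equivalently, the two addition law projections s_0 and s_1 define the same point of P^1 (the x-coordinate of P+Q) wherever both are nonzero, and likewise t_0 and t_1 define the same point (the y-coordinate of P+Q). -/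
/-- A point of the projective normal closure `E ⊂ P^3` of the twisted Edwards
curve `a*x^2 + y^2 = 1 + d*x^2*y^2`: a nonzero tuple satisfying
`d*X0^2 + X3^2 = a*X1^2 + X2^2` and `X0*X3 = X1*X2`. -/
def isEdwardsPoint {k : Type*} [Field k] (a d x0 x1 x2 x3 : k) : Prop :=
  ¬(x0 = 0 ∧ x1 = 0 ∧ x2 = 0 ∧ x3 = 0) ∧
  d * x0 ^ 2 + x3 ^ 2 = a * x1 ^ 2 + x2 ^ 2 ∧
  x0 * x3 = x1 * x2

/-- On the twisted Edwards model, the two addition law projections `s_0, s_1`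
for the `x`-coordinate agree as points of `P^1`, and likewise `t_0, t_1` for
the `y`-coordinate:
`(x0*y3 + x3*y0)*(d*x0*y0 + x3*y3) = (a*x1*y1 + x2*y2)*(x1*y2 + x2*y1)` and
`(x0*y3 - x3*y0)*(d*x0*y0 - x3*y3) = (a*x1*y1 - x2*y2)*(x1*y2 - x2*y1)`. -/
theorem edwards_projections_agree {k : Type*} [Field k] (a d : k)
    (hchar : (2 : k) ≠ 0) (hns : a * d * (a - d) ≠ 0)
    (x0 x1 x2 x3 y0 y1 y2 y3 : k)
    (hP : isEdwardsPoint a d x0 x1 x2 x3)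
    (hQ : isEdwardsPoint a d y0 y1 y2 y3) :
    (x0 * y3 + x3 * y0) * (d * x0 * y0 + x3 * y3) =
        (a * x1 * y1 + x2 * y2) * (x1 * y2 + x2 * y1) ∧
      (x0 * y3 - x3 * y0) * (d * x0 * y0 - x3 * y3) =
        (a * x1 * y1 - x2 * y2) * (x1 * y2 - x2 * y1) := by
  obtain ⟨-, hP1, hP2⟩ := hP
  obtain ⟨-, hQ1, hQ2⟩ := hQ
  constructor
  · linear_combination y0*y3*hP1 + (a*x1^2+x2^2)*hQ2 + x1*x2*hQ1 + (d*y0^2+y3^2)*hP2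
  · linear_combination y0*y3*hP1 + (a*x1^2+x2^2)*hQ2 - x1*x2*hQ1 - (d*y0^2+y3^2)*hP2
end

section
/- Suppose c, e ∈ k satisfy c^2 = a ≠ 0 and e^2 = d ≠ 0. Define linear maps on k^4: L(x0,x1,x2,x3) = (−x0, c^{-1}x2, −c*x1, x3) (translation by the 4-torsion point T1 = (0:1:0:c)), L'(x0,x1,x2,x3) = (−x0, −c^{-1}x2, c*x1, x3) (translation by −T1), M(x0,x1,x2,x3) = (−e^{-1}x3, x1, −x2, e*x0) (translation by T2 = (1:0:e:0)), and M'(x0,x1,x2,x3) = (e^{-1}x3, x1, −x2, −e*x0) (translation by −T2). Then for ALL x, y ∈ k^4 the following exact componentwise identities hold: s_0(Lx, L'y) = −s_0(x,y), s_1(Lx, L'y) = s_1(x,y), t_0(Lx, L'y) = −t_0(x,y), t_1(Lx, L'y) = t_1(x,y); and s_0(Mx, M'y) = s_0(x,y), s_1(Mx, M'y) = −s_1(x,y), t_0(Mx, M'y) = −t_0(x,y), t_1(Mx, M'y) = t_1(x,y). In particular each of s_0, s_1, t_0, t_1 is an eigenvector, with the indicated eigenvalues, for the action of the torsion elements (T1,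 −T1, O) and (T2, −T2, O). -/
/-- Addition law projection `s_0` for the `x`-coordinate on the twisted Edwards model. -/
def edwardsS0 {k : Type*} [Field k] (a : k) (x0 x1 x2 x3 y0 y1 y2 y3 : k) : k × k :=
  (x0 * y3 + x3 * y0, a * x1 * y1 + x2 * y2)

/-- Addition law projection `s_1` for the `x`-coordinate on the twisted Edwards model. -/
def edwardsS1 {k : Type*} [Field k] (d : k) (x0 x1 x2 x3 y0 y1 y2 y3 : k) : k × k :=
  (x1 * y2 + x2 * y1, d * x0 * y0 + x3 * y3)

/-- Addition law projection `t_0` for the `y`-coordinate on the twisted Edwards model. -/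
def edwardsT0 {k : Type*} [Field k] (x0 x1 x2 x3 y0 y1 y2 y3 : k) : k × k :=
  (x0 * y3 - x3 * y0, x1 * y2 - x2 * y1)

/-- Addition law projection `t_1` for the `y`-coordinate on the twisted Edwards model. -/
def edwardsT1 {k : Type*} [Field k] (a d : k) (x0 x1 x2 x3 y0 y1 y2 y3 : k) : k × k :=
  (a * x1 * y1 - x2 * y2, d * x0 * y0 - x3 * y3)

/-- Each of `s_0, s_1, t_0, t_1` is an eigenvector, with the indicated eigenvalues,
for the action of the torsion elements `(T1, -T1, O)` and `(T2, -T2, O)`, where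
`T1 = (0:1:0:c)`, `T2 = (1:0:e:0)`, `c^2 = a`, `e^2 = d`, and translation by
`±T1`, `±T2` is given by the linear maps `L, L', M, M'` on `k^4`. -/
theorem edwards_laws_eigenvectors {k : Type*} [Field k] (a d c e : k)
    (hchar : (2 : k) ≠ 0) (hns : a * d * (a - d) ≠ 0)
    (hc : c ^ 2 = a) (ha : a ≠ 0) (he : e ^ 2 = d) (hd : d ≠ 0) :
    ∀ x0 x1 x2 x3 y0 y1 y2 y3 : k,
      -- action of (T1, -T1, O): Lx = (-x0, c⁻¹x2, -c*x1, x3), L'y = (-y0, -c⁻¹y2, c*y1, y3)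
      (edwardsS0 a (-x0) (c⁻¹ * x2) (-(c * x1)) x3 (-y0) (-(c⁻¹ * y2)) (c * y1) y3 =
          -(edwardsS0 a x0 x1 x2 x3 y0 y1 y2 y3)) ∧
      (edwardsS1 d (-x0) (c⁻¹ * x2) (-(c * x1)) x3 (-y0) (-(c⁻¹ * y2)) (c * y1) y3 =
          edwardsS1 d x0 x1 x2 x3 y0 y1 y2 y3) ∧
      (edwardsT0 (-x0) (c⁻¹ * x2) (-(c * x1)) x3 (-y0) (-(c⁻¹ * y2)) (c * y1) y3 =
          -(edwardsT0 x0 x1 x2 x3 y0 y1 y2 y3)) ∧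
      (edwardsT1 a d (-x0) (c⁻¹ * x2) (-(c * x1)) x3 (-y0) (-(c⁻¹ * y2)) (c * y1) y3 =
          edwardsT1 a d x0 x1 x2 x3 y0 y1 y2 y3) ∧
      -- action of (T2, -T2, O): Mx = (-e⁻¹x3, x1, -x2, e*x0), M'y = (e⁻¹y3, y1, -y2, -e*y0)
      (edwardsS0 a (-(e⁻¹ * x3)) x1 (-x2) (e * x0) (e⁻¹ * y3) y1 (-y2) (-(e * y0)) =
          edwardsS0 a x0 x1 x2 x3 y0 y1 y2 y3) ∧
      (edwardsS1 d (-(e⁻¹ * x3)) x1 (-x2) (e * x0) (e⁻¹ * y3) y1 (-y2) (-(e * y0)) =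
          -(edwardsS1 d x0 x1 x2 x3 y0 y1 y2 y3)) ∧
      (edwardsT0 (-(e⁻¹ * x3)) x1 (-x2) (e * x0) (e⁻¹ * y3) y1 (-y2) (-(e * y0)) =
          -(edwardsT0 x0 x1 x2 x3 y0 y1 y2 y3)) ∧
      (edwardsT1 a d (-(e⁻¹ * x3)) x1 (-x2) (e * x0) (e⁻¹ * y3) y1 (-y2) (-(e * y0)) =
          edwardsT1 a d x0 x1 x2 x3 y0 y1 y2 y3) := by
  intro x0 x1 x2 x3 y0 y1 y2 y3
  have hc0 : c ≠ 0 := by intro h; apply ha; rw [← hc, h]; ring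
  have he0 : e ≠ 0 := by intro h; apply hd; rw [← he, h]; ring
  subst hc he
  refine ⟨?_, ?_, ?_, ?_, ?_, ?_, ?_, ?_⟩ <;>
    simp only [edwardsS0, edwardsS1, edwardsT0, edwardsT1, Prod.ext_iff, Prod.neg_mk,
      Prod.fst, Prod.snd] <;> constructor <;> field_simp <;> ring
end

section
/- There exist k-points P, Q of E with s_0(P,Q) = (0,0) if and only if a is a square in k; there exist k-points P, Q with s_1(P,Q) = (0,0) if and only if d is a square in k; and there exist k-points P, Q with t_1(P,Q) = (0,0) if and only if a*d is a square in k. Equivalently: the addition law projection s_0 is k-complete if and only if a is a nonsquare, s_1 is k-complete if and only if d is a nonsquare, and t_1 is k-complete if and only if a*d is a nonsquare. -/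
/-- No point of `E` has `x0 = x3 = 0`. -/
lemma edwards_aux0 {k : Type*} [Field k] {a d x0 x1 x2 x3 : k} (ha : a ≠ 0)
    (hnz : ¬(x0 = 0 ∧ x1 = 0 ∧ x2 = 0 ∧ x3 = 0))
    (h1 : d * x0 ^ 2 + x3 ^ 2 = a * x1 ^ 2 + x2 ^ 2)
    (h2 : x0 * x3 = x1 * x2) (h0 : x0 = 0) (h3 : x3 = 0) : False := by
  subst h0 h3
  have h2' : x1 * x2 = 0 := by linear_combination -h2
  have h1' : a * x1 ^ 2 + x2 ^ 2 = 0 := by linear_combination -h1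
  rcases mul_eq_zero.mp h2' with h | h
  · subst h
    have hx2 : x2 = 0 := by
      have : x2 ^ 2 = 0 := by linear_combination h1'
      exact pow_eq_zero_iff two_ne_zero |>.mp this
    exact hnz ⟨rfl, rfl, hx2, rfl⟩
  · subst h
    have hx1 : x1 = 0 := by
      have h' : a * x1 ^ 2 = 0 := by linear_combination h1'
      rcases mul_eq_zero.mp h' with h | h
      · exact absurd h ha
      · exact pow_eq_zero_iff two_ne_zero |>.mp h
    exact hnz ⟨rfl, hx1, rfl, rfl⟩

/-- If `c*x^2 = e*y^2` with `c, x ≠ 0` then `y ≠ 0`. -/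
lemma edwards_nz {k : Type*} [Field k] {c e x y : k} (hc : c ≠ 0) (hx : x ≠ 0)
    (h : c * x ^ 2 = e * y ^ 2) : y ≠ 0 := by
  intro hy
  subst hy
  have h' : c * x ^ 2 = 0 := by linear_combination h
  rcases mul_eq_zero.mp h' with h | h
  · exact hc h
  · exact hx (pow_eq_zero_iff two_ne_zero |>.mp h)

/-- Produce a square root of `a` from a relation `a*q^2 = p^2` with `q ≠ 0`. -/
lemma edwards_sq {k : Type*} [Field k] {a p q : k} (hq : q ≠ 0)
    (h : a * q ^ 2 = p ^ 2) : ∃ r : k, r ^ 2 = a :=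
  ⟨p / q, by field_simp; linear_combination -h⟩

lemma edwards_s0_aux {k : Type*} [Field k] {a d x0 x1 x2 x3 y0 y1 y2 y3 : k}
    (ha : a ≠ 0) (hd : d ≠ 0)
    (hP : isEdwardsPoint a d x0 x1 x2 x3) (hQ : isEdwardsPoint a d y0 y1 y2 y3)
    (C1 : x0 * y3 + x3 * y0 = 0) (C2 : a * x1 * y1 + x2 * y2 = 0) :
    ∃ r : k, r ^ 2 = a := by
  obtain ⟨hPnz, hP1, hP2⟩ := hP
  obtain ⟨hQnz, hQ1, hQ2⟩ := hQ
  by_cases h3 : x3 = 0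
  · subst h3
    have hx0 : x0 ≠ 0 := fun h => edwards_aux0 ha hPnz hP1 hP2 h rfl
    have hy3 : y3 = 0 := by
      have h : x0 * y3 = 0 := by linear_combination C1
      exact (mul_eq_zero.mp h).resolve_left hx0
    subst hy3
    have hy0 : y0 ≠ 0 := fun h => edwards_aux0 ha hQnz hQ1 hQ2 h rfl
    have hx12 : x1 * x2 = 0 := by linear_combination -hP2
    have hy12 : y1 * y2 = 0 := by linear_combination -hQ2
    rcases mul_eq_zero.mp hx12 with h1 | h2
    · subst h1
      have ex : d * x0 ^ 2 = 1 * x2 ^ 2 := by linear_combination hP1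
      have hx2 : x2 ≠ 0 := edwards_nz hd hx0 ex
      rcases mul_eq_zero.mp hy12 with g1 | g2
      · subst g1
        have ey : d * y0 ^ 2 = 1 * y2 ^ 2 := by linear_combination hQ1
        have hy2 : y2 ≠ 0 := edwards_nz hd hy0 ey
        have h : x2 * y2 = 0 := by linear_combination C2
        rcases mul_eq_zero.mp h with h | h
        · exact absurd h hx2
        · exact absurd h hy2
      · subst g2
        have ey : d * y0 ^ 2 = a * y1 ^ 2 := by linear_combination hQ1
        have hy1 : y1 ≠ 0 := edwards_nz hd hy0 ey
        exact edwards_sq (mul_ne_zero hx0 hy1)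
          (show a * (x0 * y1) ^ 2 = (x2 * y0) ^ 2 by
            linear_combination y0 ^ 2 * ex - x0 ^ 2 * ey)
    · subst h2
      have ex : d * x0 ^ 2 = a * x1 ^ 2 := by linear_combination hP1
      have hx1 : x1 ≠ 0 := edwards_nz hd hx0 ex
      rcases mul_eq_zero.mp hy12 with g1 | g2
      · subst g1
        have ey : d * y0 ^ 2 = 1 * y2 ^ 2 := by linear_combination hQ1
        have hy2 : y2 ≠ 0 := edwards_nz hd hy0 ey
        exact edwards_sq (mul_ne_zero hx1 hy0)
          (show a * (x1 * y0) ^ 2 = (x0 * y2) ^ 2 by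
            linear_combination x0 ^ 2 * ey - y0 ^ 2 * ex)
      · subst g2
        have ey : d * y0 ^ 2 = a * y1 ^ 2 := by linear_combination hQ1
        have hy1 : y1 ≠ 0 := edwards_nz hd hy0 ey
        have h : a * x1 * y1 = 0 := by linear_combination C2
        rcases mul_eq_zero.mp h with h | h
        · rcases mul_eq_zero.mp h with h' | h'
          · exact absurd h' ha
          · exact absurd h' hx1
        · exact absurd h hy1
  · by_cases hy3 : y3 = 0
    · subst hy3
      have hy0 : y0 ≠ 0 := fun h => edwards_aux0 ha hQnz hQ1 hQ2 h rfl
      have h : x3 * y0 = 0 := by linear_combination C1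
      rcases mul_eq_zero.mp h with h | h
      · exact absurd h h3
      · exact absurd h hy0
    · by_cases hx2 : x2 = 0
      · subst hx2
        have hx0 : x0 = 0 := by
          have h : x0 * x3 = 0 := by linear_combination hP2
          exact (mul_eq_zero.mp h).resolve_right h3
        subst hx0
        have ex : 1 * x3 ^ 2 = a * x1 ^ 2 := by linear_combination hP1
        have hx1 : x1 ≠ 0 := edwards_nz one_ne_zero h3 ex
        exact edwards_sq hx1
          (show a * x1 ^ 2 = x3 ^ 2 by linear_combination -ex)
      · by_cases hy2 : y2 = 0
        · subst hy2
          have hy0 : y0 = 0 := by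
            have h : y0 * y3 = 0 := by linear_combination hQ2
            exact (mul_eq_zero.mp h).resolve_right hy3
          subst hy0
          have ey : 1 * y3 ^ 2 = a * y1 ^ 2 := by linear_combination hQ1
          have hy1 : y1 ≠ 0 := edwards_nz one_ne_zero hy3 ey
          exact edwards_sq hy1
            (show a * y1 ^ 2 = y3 ^ 2 by linear_combination -ey)
        · have hy1 : y1 ≠ 0 := by
            intro h
            subst h
            have h' : x2 * y2 = 0 := by linear_combination C2
            rcases mul_eq_zero.mp h' with h | h
            · exact hx2 h
            · exact hy2 h
          have hx1 : x1 ≠ 0 := by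
            intro h
            subst h
            have h' : x2 * y2 = 0 := by linear_combination C2
            rcases mul_eq_zero.mp h' with h | h
            · exact hx2 h
            · exact hy2 h
          have key : y1 * (x3 ^ 2 * y2 ^ 2 - a * x1 ^ 2 * y3 ^ 2) = 0 := by
            linear_combination (x3 * y3 * y2) * C1 - (y3 ^ 2 * y2) * hP2 -
              (x3 ^ 2 * y2) * hQ2 - (x1 * y3 ^ 2) * C2
          have key2 : a * (x1 * y3) ^ 2 = (x3 * y2) ^ 2 := by
            have h := (mul_eq_zero.mp key).resolve_left hy1
            linear_combination -h
          exact edwards_sq (mul_ne_zero hx1 hy3) key2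

lemma edwards_s1_aux {k : Type*} [Field k] {a d x0 x1 x2 x3 y0 y1 y2 y3 : k}
    (ha : a ≠ 0) (hd : d ≠ 0)
    (hP : isEdwardsPoint a d x0 x1 x2 x3) (hQ : isEdwardsPoint a d y0 y1 y2 y3)
    (C1 : x1 * y2 + x2 * y1 = 0) (C2 : d * x0 * y0 + x3 * y3 = 0) :
    ∃ r : k, r ^ 2 = d := by
  obtain ⟨hPnz, hP1, hP2⟩ := hP
  obtain ⟨hQnz, hQ1, hQ2⟩ := hQ
  by_cases h3 : x3 = 0
  · subst h3
    have hx0 : x0 ≠ 0 := fun h => edwards_aux0 ha hPnz hP1 hP2 h rfl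
    have hy0 : y0 = 0 := by
      have h : d * x0 * y0 = 0 := by linear_combination C2
      rcases mul_eq_zero.mp h with h | h
      · rcases mul_eq_zero.mp h with h' | h'
        · exact absurd h' hd
        · exact absurd h' hx0
      · exact h
    subst hy0
    have hy3 : y3 ≠ 0 := fun h => edwards_aux0 ha hQnz hQ1 hQ2 rfl h
    have hx12 : x1 * x2 = 0 := by linear_combination -hP2
    rcases mul_eq_zero.mp hx12 with h1 | h2
    · subst h1
      have ex : d * x0 ^ 2 = 1 * x2 ^ 2 := by linear_combination hP1
      exact edwards_sq hx0 (show d * x0 ^ 2 = x2 ^ 2 by linear_combination ex)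
    · subst h2
      have ex : d * x0 ^ 2 = a * x1 ^ 2 := by linear_combination hP1
      have hx1 : x1 ≠ 0 := edwards_nz hd hx0 ex
      have hy2 : y2 = 0 := by
        have h : x1 * y2 = 0 := by linear_combination C1
        exact (mul_eq_zero.mp h).resolve_left hx1
      subst hy2
      have ey : 1 * y3 ^ 2 = a * y1 ^ 2 := by linear_combination hQ1
      have hy1 : y1 ≠ 0 := edwards_nz one_ne_zero hy3 ey
      exact edwards_sq (mul_ne_zero hx0 hy1)
        (show d * (x0 * y1) ^ 2 = (x1 * y3) ^ 2 by
          linear_combination y1 ^ 2 * ex - x1 ^ 2 * ey)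
  · by_cases hy3 : y3 = 0
    · subst hy3
      have hy0 : y0 ≠ 0 := fun h => edwards_aux0 ha hQnz hQ1 hQ2 h rfl
      have hx0 : x0 = 0 := by
        have h : d * x0 * y0 = 0 := by linear_combination C2
        rcases mul_eq_zero.mp h with h | h
        · rcases mul_eq_zero.mp h with h' | h'
          · exact absurd h' hd
          · exact h'
        · exact absurd h hy0
      subst hx0
      have hy12 : y1 * y2 = 0 := by linear_combination -hQ2
      rcases mul_eq_zero.mp hy12 with h1 | h2
      · subst h1
        have ey : d * y0 ^ 2 = 1 * y2 ^ 2 := by linear_combination hQ1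
        exact edwards_sq hy0 (show d * y0 ^ 2 = y2 ^ 2 by linear_combination ey)
      · subst h2
        have ey : d * y0 ^ 2 = a * y1 ^ 2 := by linear_combination hQ1
        have hy1 : y1 ≠ 0 := edwards_nz hd hy0 ey
        have hx2 : x2 = 0 := by
          have h : x2 * y1 = 0 := by linear_combination C1
          exact (mul_eq_zero.mp h).resolve_right hy1
        subst hx2
        have ex : 1 * x3 ^ 2 = a * x1 ^ 2 := by linear_combination hP1
        have hx1 : x1 ≠ 0 := edwards_nz one_ne_zero h3 ex
        exact edwards_sq (mul_ne_zero hy0 hx1)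
          (show d * (y0 * x1) ^ 2 = (y1 * x3) ^ 2 by
            linear_combination x1 ^ 2 * ey - y1 ^ 2 * ex)
    · have hx0 : x0 ≠ 0 := by
        intro h
        subst h
        have h' : x3 * y3 = 0 := by linear_combination C2
        rcases mul_eq_zero.mp h' with h | h
        · exact h3 h
        · exact hy3 h
      have hy0 : y0 ≠ 0 := by
        intro h
        subst h
        have h' : x3 * y3 = 0 := by linear_combination C2
        rcases mul_eq_zero.mp h' with h | h
        · exact h3 h
        · exact hy3 h
      have hx12 : x1 * x2 ≠ 0 := by rw [← hP2]; exact mul_ne_zero hx0 h3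
      have hy12 : y1 * y2 ≠ 0 := by rw [← hQ2]; exact mul_ne_zero hy0 hy3
      have hx2 : x2 ≠ 0 := fun h => hx12 (by rw [h, mul_zero])
      have hy1 : y1 ≠ 0 := fun h => hy12 (by rw [h, zero_mul])
      have key1 : d * x1 * x2 * y1 * y2 + x3 ^ 2 * y3 ^ 2 = 0 := by
        linear_combination x3 * y3 * C2 - d * y0 * y3 * hP2 - d * x1 * x2 * hQ2
      have key2 : d * (x2 * y1) ^ 2 = (x3 * y3) ^ 2 := by
        linear_combination -key1 + d * x2 * y1 * C1
      exact edwards_sq (mul_ne_zero hx2 hy1) key2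

lemma edwards_t1_aux {k : Type*} [Field k] {a d x0 x1 x2 x3 y0 y1 y2 y3 : k}
    (ha : a ≠ 0) (hd : d ≠ 0)
    (hP : isEdwardsPoint a d x0 x1 x2 x3) (hQ : isEdwardsPoint a d y0 y1 y2 y3)
    (C1 : a * x1 * y1 - x2 * y2 = 0) (C2 : d * x0 * y0 - x3 * y3 = 0) :
    ∃ r : k, r ^ 2 = a * d := by
  obtain ⟨hPnz, hP1, hP2⟩ := hP
  obtain ⟨hQnz, hQ1, hQ2⟩ := hQ
  by_cases h3 : x3 = 0
  · subst h3
    have hx0 : x0 ≠ 0 := fun h => edwards_aux0 ha hPnz hP1 hP2 h rfl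
    have hy0 : y0 = 0 := by
      have h : d * x0 * y0 = 0 := by linear_combination C2
      rcases mul_eq_zero.mp h with h | h
      · rcases mul_eq_zero.mp h with h' | h'
        · exact absurd h' hd
        · exact absurd h' hx0
      · exact h
    subst hy0
    have hy3 : y3 ≠ 0 := fun h => edwards_aux0 ha hQnz hQ1 hQ2 rfl h
    have hx12 : x1 * x2 = 0 := by linear_combination -hP2
    rcases mul_eq_zero.mp hx12 with h1 | h2
    · subst h1
      have ex : d * x0 ^ 2 = 1 * x2 ^ 2 := by linear_combination hP1
      have hx2 : x2 ≠ 0 := edwards_nz hd hx0 ex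
      have hy2 : y2 = 0 := by
        have h : x2 * y2 = 0 := by linear_combination -C1
        exact (mul_eq_zero.mp h).resolve_left hx2
      subst hy2
      have ey : 1 * y3 ^ 2 = a * y1 ^ 2 := by linear_combination hQ1
      have hy1 : y1 ≠ 0 := edwards_nz one_ne_zero hy3 ey
      exact edwards_sq (mul_ne_zero hx0 hy1)
        (show a * d * (x0 * y1) ^ 2 = (x2 * y3) ^ 2 by
          linear_combination a * y1 ^ 2 * ex - x2 ^ 2 * ey)
    · subst h2
      have ex : d * x0 ^ 2 = a * x1 ^ 2 := by linear_combination hP1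
      exact edwards_sq hx0
        (show a * d * x0 ^ 2 = (a * x1) ^ 2 by linear_combination a * ex)
  · by_cases hy3 : y3 = 0
    · subst hy3
      have hy0 : y0 ≠ 0 := fun h => edwards_aux0 ha hQnz hQ1 hQ2 h rfl
      have hx0 : x0 = 0 := by
        have h : d * x0 * y0 = 0 := by linear_combination C2
        rcases mul_eq_zero.mp h with h | h
        · rcases mul_eq_zero.mp h with h' | h'
          · exact absurd h' hd
          · exact h'
        · exact absurd h hy0
      subst hx0
      have hy12 : y1 * y2 = 0 := by linear_combination -hQ2
      rcases mul_eq_zero.mp hy12 with h1 | h2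
      · subst h1
        have ey : d * y0 ^ 2 = 1 * y2 ^ 2 := by linear_combination hQ1
        have hy2 : y2 ≠ 0 := edwards_nz hd hy0 ey
        have hx2 : x2 = 0 := by
          have h : x2 * y2 = 0 := by linear_combination -C1
          exact (mul_eq_zero.mp h).resolve_right hy2
        subst hx2
        have ex : 1 * x3 ^ 2 = a * x1 ^ 2 := by linear_combination hP1
        have hx1 : x1 ≠ 0 := edwards_nz one_ne_zero h3 ex
        exact edwards_sq (mul_ne_zero hy0 hx1)
          (show a * d * (y0 * x1) ^ 2 = (y2 * x3) ^ 2 by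
            linear_combination a * x1 ^ 2 * ey - y2 ^ 2 * ex)
      · subst h2
        have ey : d * y0 ^ 2 = a * y1 ^ 2 := by linear_combination hQ1
        exact edwards_sq hy0
          (show a * d * y0 ^ 2 = (a * y1) ^ 2 by linear_combination a * ey)
    · have hx0 : x0 ≠ 0 := by
        intro h
        subst h
        have h' : x3 * y3 = 0 := by linear_combination -C2
        rcases mul_eq_zero.mp h' with h | h
        · exact h3 h
        · exact hy3 h
      have hy0 : y0 ≠ 0 := by
        intro h
        subst h
        have h' : x3 * y3 = 0 := by linear_combination -C2
        rcases mul_eq_zero.mp h' with h | h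
        · exact h3 h
        · exact hy3 h
      have hx12 : x1 * x2 ≠ 0 := by rw [← hP2]; exact mul_ne_zero hx0 h3
      have hy12 : y1 * y2 ≠ 0 := by rw [← hQ2]; exact mul_ne_zero hy0 hy3
      have hx1 : x1 ≠ 0 := fun h => hx12 (by rw [h, zero_mul])
      have hy1 : y1 ≠ 0 := fun h => hy12 (by rw [h, zero_mul])
      have key1 : d * x1 * x2 * y1 * y2 - x3 ^ 2 * y3 ^ 2 = 0 := by
        linear_combination x3 * y3 * C2 - d * y0 * y3 * hP2 - d * x1 * x2 * hQ2
      have key2 : a * d * (x1 * y1) ^ 2 = (x3 * y3) ^ 2 := by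
        linear_combination key1 + d * x1 * y1 * C1
      exact edwards_sq (mul_ne_zero hx1 hy1) key2

/-- The addition law projection `s_0` vanishes at some pair of `k`-points of `E`
iff `a` is a square, `s_1` vanishes at some pair iff `d` is a square, and `t_1`
vanishes at some pair iff `a*d` is a square; equivalently, `s_0` (resp. `s_1`,
`t_1`) is `k`-complete iff `a` (resp. `d`, `a*d`) is a nonsquare. -/
theorem edwards_completeness {k : Type*} [Field k] (a d : k)
    (hchar : (2 : k) ≠ 0) (hns : a * d * (a - d) ≠ 0) :
    ((∃ x0 x1 x2 x3 y0 y1 y2 y3 : k,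
        isEdwardsPoint a d x0 x1 x2 x3 ∧ isEdwardsPoint a d y0 y1 y2 y3 ∧
        x0 * y3 + x3 * y0 = 0 ∧ a * x1 * y1 + x2 * y2 = 0) ↔ ∃ r : k, r ^ 2 = a) ∧
    ((∃ x0 x1 x2 x3 y0 y1 y2 y3 : k,
        isEdwardsPoint a d x0 x1 x2 x3 ∧ isEdwardsPoint a d y0 y1 y2 y3 ∧
        x1 * y2 + x2 * y1 = 0 ∧ d * x0 * y0 + x3 * y3 = 0) ↔ ∃ r : k, r ^ 2 = d) ∧
    ((∃ x0 x1 x2 x3 y0 y1 y2 y3 : k,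
        isEdwardsPoint a d x0 x1 x2 x3 ∧ isEdwardsPoint a d y0 y1 y2 y3 ∧
        a * x1 * y1 - x2 * y2 = 0 ∧ d * x0 * y0 - x3 * y3 = 0) ↔ ∃ r : k, r ^ 2 = a * d) := by
  have ha : a ≠ 0 := by intro h; apply hns; rw [h]; ring
  have hd : d ≠ 0 := by intro h; apply hns; rw [h]; ring
  refine ⟨⟨?_, ?_⟩, ⟨?_, ?_⟩, ⟨?_, ?_⟩⟩
  · rintro ⟨x0, x1, x2, x3, y0, y1, y2, y3, hP, hQ, C1, C2⟩
    exact edwards_s0_aux ha hd hP hQ C1 C2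
  · rintro ⟨r, hr⟩
    exact ⟨0, 1, 0, r, 0, 0, 1, 1,
      ⟨by simp, by linear_combination hr, by ring⟩,
      ⟨by simp, by ring, by ring⟩, by ring, by ring⟩
  · rintro ⟨x0, x1, x2, x3, y0, y1, y2, y3, hP, hQ, C1, C2⟩
    exact edwards_s1_aux ha hd hP hQ C1 C2
  · rintro ⟨r, hr⟩
    exact ⟨1, 0, r, 0, 0, 0, 1, 1,
      ⟨by simp, by linear_combination -hr, by ring⟩,
      ⟨by simp, by ring, by ring⟩, by ring, by ring⟩
  · rintro ⟨x0, x1, x2, x3, y0, y1, y2, y3, hP, hQ, C1, C2⟩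
    exact edwards_t1_aux ha hd hP hQ C1 C2
  · rintro ⟨r, hr⟩
    exact ⟨a, r, 0, 0, 0, 0, 1, 1,
      ⟨fun h => ha h.1, by linear_combination (-a) * hr, by ring⟩,
      ⟨by simp, by ring, by ring⟩, by ring, by ring⟩
end

section
/- For all k-points P, Q of E, the pairs s_0(P,Q) and s_1(P,Q) are not both equal to (0,0); that is, {s_0, s_1} is a geometrically complete set of addition law projections for the x-coordinate (their exceptional divisors Δ_{T1} + Δ_{−T1} and Δ_{T2} + Δ_{−T2} are disjoint). -/
/-- The addition law projections `s_0` and `s_1` for the `x`-coordinate never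
vanish simultaneously at a pair of points of `E`: `{s_0, s_1}` is a
geometrically complete set of addition law projections. -/
theorem edwards_s0_s1_complete {k : Type*} [Field k] (a d : k)
    (hchar : (2 : k) ≠ 0) (hns : a * d * (a - d) ≠ 0)
    (x0 x1 x2 x3 y0 y1 y2 y3 : k)
    (hP : isEdwardsPoint a d x0 x1 x2 x3)
    (hQ : isEdwardsPoint a d y0 y1 y2 y3) :
    ¬((x0 * y3 + x3 * y0 = 0 ∧ a * x1 * y1 + x2 * y2 = 0) ∧
      (x1 * y2 + x2 * y1 = 0 ∧ d * x0 * y0 + x3 * y3 = 0)) := by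
  rintro ⟨⟨h1, h2⟩, h3, h4⟩
  obtain ⟨hPnz, hPc, hPm⟩ := hP
  obtain ⟨hQnz, hQc, hQm⟩ := hQ
  have ha : a ≠ 0 := left_ne_zero_of_mul (left_ne_zero_of_mul hns)
  have hd : d ≠ 0 := right_ne_zero_of_mul (left_ne_zero_of_mul hns)
  have had : a - d ≠ 0 := right_ne_zero_of_mul hns
  -- key eliminations
  have hx0 : x0 * (y3 ^ 2 - d * y0 ^ 2) = 0 := by linear_combination y3 * h1 - y0 * h4
  have hx3 : x3 * (d * y0 ^ 2 - y3 ^ 2) = 0 := by linear_combination d * y0 * h1 - y3 * h4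
  have hx2 : x2 * (y2 ^ 2 - a * y1 ^ 2) = 0 := by linear_combination y2 * h2 - a * y1 * h3
  have hx1 : x1 * (a * y1 ^ 2 - y2 ^ 2) = 0 := by linear_combination y1 * h2 - y2 * h3
  have hA : y3 ^ 2 = d * y0 ^ 2 := by
    by_contra h
    have h' : y3 ^ 2 - d * y0 ^ 2 ≠ 0 := sub_ne_zero.mpr h
    have hx0' : x0 = 0 := by
      rcases mul_eq_zero.mp hx0 with h0 | h0
      · exact h0
      · exact absurd h0 h'
    have hx3' : x3 = 0 := by
      rcases mul_eq_zero.mp hx3 with h0 | h0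
      · exact h0
      · exact absurd (by linear_combination -h0) h'
    -- from the curve equations, x1 = x2 = 0 too
    have hc : a * x1 ^ 2 + x2 ^ 2 = 0 := by
      rw [hx0', hx3'] at hPc; linear_combination -hPc
    have hm : x1 * x2 = 0 := by rw [hx0', hx3'] at hPm; linear_combination -hPm
    rcases mul_eq_zero.mp hm with h0 | h0
    · have : x2 = 0 := by
        have : x2 ^ 2 = 0 := by rw [h0] at hc; linear_combination hc
        exact pow_eq_zero_iff (n := 2) (by norm_num) |>.mp this
      exact hPnz ⟨hx0', h0, this, hx3'⟩
    · have : x1 = 0 := by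
        have h1' : a * x1 ^ 2 = 0 := by rw [h0] at hc; linear_combination hc
        have : x1 ^ 2 = 0 := by
          rcases mul_eq_zero.mp h1' with h | h
          · exact absurd h ha
          · exact h
        exact pow_eq_zero_iff (n := 2) (by norm_num) |>.mp this
      exact hPnz ⟨hx0', this, h0, hx3'⟩
  have hB : y2 ^ 2 = a * y1 ^ 2 := by
    by_contra h
    have h' : a * y1 ^ 2 - y2 ^ 2 ≠ 0 := fun hz => h (by linear_combination -hz)
    have hx1' : x1 = 0 := by
      rcases mul_eq_zero.mp hx1 with h0 | h0
      · exact h0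
      · exact absurd h0 h'
    have hx2' : x2 = 0 := by
      rcases mul_eq_zero.mp hx2 with h0 | h0
      · exact h0
      · exact absurd (by linear_combination -h0 : a * y1 ^ 2 - y2 ^ 2 = 0) h'
    have hc : d * x0 ^ 2 + x3 ^ 2 = 0 := by rw [hx1', hx2'] at hPc; linear_combination hPc
    have hm : x0 * x3 = 0 := by rw [hx1', hx2'] at hPm; linear_combination hPm
    rcases mul_eq_zero.mp hm with h0 | h0
    · have : x3 = 0 := by
        have : x3 ^ 2 = 0 := by rw [h0] at hc; linear_combination hc
        exact pow_eq_zero_iff (n := 2) (by norm_num) |>.mp this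
      exact hPnz ⟨h0, hx1', hx2', this⟩
    · have : x0 = 0 := by
        have h1' : d * x0 ^ 2 = 0 := by rw [h0] at hc; linear_combination hc
        have : x0 ^ 2 = 0 := by
          rcases mul_eq_zero.mp h1' with h | h
          · exact absurd h hd
          · exact h
        exact pow_eq_zero_iff (n := 2) (by norm_num) |>.mp this
      exact hPnz ⟨this, hx1', hx2', h0⟩
  -- now derive d*y0^2 = a*y1^2 using 2 ≠ 0
  have h5 : d * y0 ^ 2 = a * y1 ^ 2 := by
    have h2eq : 2 * (d * y0 ^ 2) = 2 * (a * y1 ^ 2) := by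
      linear_combination hQc - hA + hB
    exact mul_left_cancel₀ hchar h2eq
  have h6 : a * y1 ^ 2 * (y1 ^ 2 - y0 ^ 2) = 0 := by
    linear_combination y0 ^ 2 * hA - y1 ^ 2 * hB + y0 ^ 2 * h5 - (y0 * y3 + y1 * y2) * hQm
  have hy1 : y1 = 0 := by
    rcases mul_eq_zero.mp h6 with h0 | h0
    · rcases mul_eq_zero.mp h0 with h | h
      · exact absurd h ha
      · exact pow_eq_zero_iff (n := 2) (by norm_num) |>.mp h
    · -- y1^2 = y0^2, so (a - d) * y0^2 = 0, so y0 = 0, so y1 = 0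
      have hsq : y1 ^ 2 = y0 ^ 2 := sub_eq_zero.mp h0
      have : (a - d) * y0 ^ 2 = 0 := by linear_combination -h5 - a * hsq
      have hy0 : y0 = 0 := by
        rcases mul_eq_zero.mp this with h | h
        · exact absurd h had
        · exact pow_eq_zero_iff (n := 2) (by norm_num) |>.mp h
      have : y1 ^ 2 = 0 := by rw [hsq, hy0]; ring
      exact pow_eq_zero_iff (n := 2) (by norm_num) |>.mp this
  have hy2 : y2 = 0 := by
    have : y2 ^ 2 = 0 := by rw [hB, hy1]; ring
    exact pow_eq_zero_iff (n := 2) (by norm_num) |>.mp this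
  have hy0 : y0 = 0 := by
    have hdy : d * y0 ^ 2 = 0 := by rw [h5, hy1]; ring
    have : y0 ^ 2 = 0 := by
      rcases mul_eq_zero.mp hdy with h | h
      · exact absurd h hd
      · exact h
    exact pow_eq_zero_iff (n := 2) (by norm_num) |>.mp this
  have hy3 : y3 = 0 := by
    have : y3 ^ 2 = 0 := by rw [hA, hy0]; ring
    exact pow_eq_zero_iff (n := 2) (by norm_num) |>.mp this
  exact hQnz ⟨hy0, hy1, hy2, hy3⟩
end

section
/- For each pair (i,j) ∈ {0,1} × {0,1} and all k-points P, Q of E, writing s_i(P,Q) = (u, v) and t_j(P,Q) = (w, z), the Segre product 4-tuple (u*w, u*z, v*w, v*z) again satisfies the two quadric equations of E, i.e. d*(uw)^2 + (vz)^2 = a*(uz)^2 + (vw)^2 and (uw)*(vz) = (uz)*(vw). In particular the four composites φ(s_i, t_j) of the Segre embedding φ: P^1 × P^1 → P^3 with the addition law projections are bidegree (2,2) addition laws for E. -/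
/-- The two `x`-coordinate addition law projections `s_0, s_1` indexed by `Fin 2`. -/
def edwardsS {k : Type*} [Field k] (a d : k) (i : Fin 2) (x0 x1 x2 x3 y0 y1 y2 y3 : k) :
    k × k :=
  ![(x0 * y3 + x3 * y0, a * x1 * y1 + x2 * y2),
    (x1 * y2 + x2 * y1, d * x0 * y0 + x3 * y3)] i

/-- The two `y`-coordinate addition law projections `t_0, t_1` indexed by `Fin 2`. -/
def edwardsT {k : Type*} [Field k] (a d : k) (j : Fin 2) (x0 x1 x2 x3 y0 y1 y2 y3 : k) :
    k × k :=
  ![(x0 * y3 - x3 * y0, x1 * y2 - x2 * y1),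
    (a * x1 * y1 - x2 * y2, d * x0 * y0 - x3 * y3)] j

set_option maxHeartbeats 1000000 in
/-- For each pair `(i,j)`, the Segre product of `s_i(P,Q)` and `t_j(P,Q)` again
satisfies the two quadric equations of `E`: the composites `φ(s_i, t_j)` are
bidegree (2,2) addition laws for `E`. -/
theorem edwards_segre_laws_on_curve {k : Type*} [Field k] (a d : k)
    (hchar : (2 : k) ≠ 0) (hns : a * d * (a - d) ≠ 0)
    (x0 x1 x2 x3 y0 y1 y2 y3 : k)
    (hP : isEdwardsPoint a d x0 x1 x2 x3)
    (hQ : isEdwardsPoint a d y0 y1 y2 y3) :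
    ∀ i j : Fin 2,
      (d * ((edwardsS a d i x0 x1 x2 x3 y0 y1 y2 y3).1 *
              (edwardsT a d j x0 x1 x2 x3 y0 y1 y2 y3).1) ^ 2 +
          ((edwardsS a d i x0 x1 x2 x3 y0 y1 y2 y3).2 *
              (edwardsT a d j x0 x1 x2 x3 y0 y1 y2 y3).2) ^ 2 =
        a * ((edwardsS a d i x0 x1 x2 x3 y0 y1 y2 y3).1 *
              (edwardsT a d j x0 x1 x2 x3 y0 y1 y2 y3).2) ^ 2 +
          ((edwardsS a d i x0 x1 x2 x3 y0 y1 y2 y3).2 *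
              (edwardsT a d j x0 x1 x2 x3 y0 y1 y2 y3).1) ^ 2) ∧
      ((edwardsS a d i x0 x1 x2 x3 y0 y1 y2 y3).1 *
            (edwardsT a d j x0 x1 x2 x3 y0 y1 y2 y3).1) *
          ((edwardsS a d i x0 x1 x2 x3 y0 y1 y2 y3).2 *
            (edwardsT a d j x0 x1 x2 x3 y0 y1 y2 y3).2) =
        ((edwardsS a d i x0 x1 x2 x3 y0 y1 y2 y3).1 *
            (edwardsT a d j x0 x1 x2 x3 y0 y1 y2 y3).2) *
          ((edwardsS a d i x0 x1 x2 x3 y0 y1 y2 y3).2 *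
            (edwardsT a d j x0 x1 x2 x3 y0 y1 y2 y3).1) := by
  obtain ⟨-, hP1, hP2⟩ := hP
  obtain ⟨-, hQ1, hQ2⟩ := hQ
  intro i j
  fin_cases i <;> fin_cases j <;>
      simp only [edwardsS, edwardsT, Fin.isValue, Fin.mk_zero, Fin.mk_one, Matrix.cons_val_zero, Matrix.cons_val_one,
        Matrix.head_cons]
  · exact ⟨by linear_combination ((-2)*d*x0^2*y0^2*y3^2 + d*x3^2*y0^4 + (-1)*a*x1^2*y0^2*y2^2 + (-1)*a*x2^2*y0^2*y1^2 + (-1)*a^2*x1^2*y0^2*y1^2 + (-1)*x2^2*y0^2*y2^2 + (-1)*d^2*x0^2*y0^4 + a*d*x1^2*y0^4 + d*x2^2*y0^4 + (4)*a*x0^2*y1^2*y2^2 + a^2*x0^2*y1^4 + x0^2*y2^4 + (-2)*a*x0^2*y0^2*y2^2 + (-2)*a^2*x0^2*y0^2*y1^2 + (2)*a*d*x0^2*y0^4) * hP1 + ((-2)*a*x1^2*y0*y2^2*y3 + (8)*a*x1*x2*y0*y1*y2*y3 + (-2)*a*x2^2*y0*y1^2*y3 + (2)*a^2*x1^2*y0*y1^2*y3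 + (2)*x2^2*y0*y2^2*y3 + (-4)*a*x0*x3*y1^2*y2^2 + (-4)*a*x1*x2*y1^2*y2^2 + (-1)*a^2*x0*x3*y1^4 + (-1)*a^2*x1*x2*y1^4 + (-1)*x0*x3*y2^4 + (-1)*x1*x2*y2^4 + (2)*a*x0*x3*y0^2*y2^2 + (2)*a*x1*x2*y0^2*y2^2 + (2)*a^2*x0*x3*y0^2*y1^2 + (2)*a^2*x1*x2*y0^2*y1^2 + (-2)*a*d*x0*x3*y0^4 + (-2)*a*d*x1*x2*y0^4) * hP2 + (d*x0^4*y3^2 + (-1)*a*x0^2*x1^2*y2^2 + (-1)*a*x0^2*x2^2*y1^2 + (-1)*a^2*x0^2*x1^2*y1^2 + (-1)*x0^2*x2^2*y2^2 + d^2*x0^4*y0^2 + a*d*x0^4*y1^2 + d*x0^4*y2^2 + (-2)*a*d*x0^2*x1^2*y0^2 + (-2)*d*x0^2*x2^2*y0^2 + a^2*x1^4*y0^2 + x2^4*y0^2 + (-2)*a*d*x0^4*y0^2 + (2)*a^2*x0^2*x1^2*y0^2 + (2)*a*x0^2*x2^2*y0^2) * hQ1 + ((-2)*a*x1^3*x2*y2^2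 + (8)*a*x1^2*x2^2*y1*y2 + (-2)*a*x1*x2^3*y1^2 + (2)*a^2*x1^3*x2*y1^2 + (2)*x1*x2^3*y2^2 + (-1)*a^2*x1^4*y0*y3 + (-1)*a^2*x1^4*y1*y2 + (-1)*x2^4*y0*y3 + (-1)*x2^4*y1*y2 + (2)*a*d*x0^4*y0*y3 + (2)*a*d*x0^4*y1*y2 + (-2)*a^2*x0^2*x1^2*y0*y3 + (-2)*a^2*x0^2*x1^2*y1*y2 + (-2)*a*x0^2*x2^2*y0*y3 + (-2)*a*x0^2*x2^2*y1*y2) * hQ2, by ring⟩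
  · exact ⟨by linear_combination (a^2*d*x1^2*y0^2*y1^2 + (-2)*a*d*x1*x2*y0^2*y1*y2 + d*x2^2*y0^2*y2^2 + a^2*x1^2*y1^2*y3^2 + (2)*a*x1*x2*y1*y2*y3^2 + x2^2*y2^2*y3^2 + (5)*a*d*x0^2*y0^2*y3^2 + (-1)*a*x0^2*y3^4 + (-2)*a*x0*x3*y0*y3^3 + (-1)*a*d^2*x0^2*y0^4 + (2)*a*d*x0*x3*y0^3*y3 + (-1)*a*x3^2*y0^2*y3^2 + (-1)*a^2*x1^2*y0^2*y3^2 + (-1)*a*x2^2*y0^2*y3^2 + (4)*a^2*x0^2*y1^2*y2^2 + (-8)*a*d*x0^2*y1^2*y2^2 + a^3*x0^2*y1^4 + a*x0^2*y2^4 + (2)*a^2*d*x0^2*y0^4 + (-2)*a^3*x0^2*y0^2*y1^2 + (-2)*a^2*x0^2*y0^2*y2^2) * hP1 + ((-8)*a*d*x1*x2*y0*y1*y2*y3 + (4)*a*d*x0^2*y0*y3^3 + (-4)*a*d^2*x0^2*y0^3*y3 + (-2)*a^2*x1^2*y0*y3^3 + (-2)*a*x2^2*y0*y3^3 + (2)*a^2*d*x1^2*y0^3*y3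 + (2)*a*d*x2^2*y0^3*y3 + (-4)*a^2*x0*x3*y1^2*y2^2 + (-4)*a^2*x1*x2*y1^2*y2^2 + (8)*a*d*x0*x3*y1^2*y2^2 + (8)*a*d*x1*x2*y1^2*y2^2 + (-1)*a^3*x0*x3*y1^4 + (-1)*a^3*x1*x2*y1^4 + (-1)*a*x0*x3*y2^4 + (-1)*a*x1*x2*y2^4 + (-2)*a^2*d*x0*x3*y0^4 + (-2)*a^2*d*x1*x2*y0^4 + (2)*a^3*x0*x3*y0^2*y1^2 + (2)*a^3*x1*x2*y0^2*y1^2 + (2)*a^2*x0*x3*y0^2*y2^2 + (2)*a^2*x1*x2*y0^2*y2^2) * hP2 + ((-4)*a*d*x0^2*x1*x2*y1*y2 + a*d^2*x0^4*y0^2 + a^3*x1^4*y1^2 + a^2*x1^2*x2^2*y1^2 + (2)*a^2*x1^3*x2*y1*y2 + (2)*a*x1*x2^3*y1*y2 + a*x1^2*x2^2*y2^2 + x2^4*y2^2 + (4)*a*d*x0^2*x1*x2*y0*y3 + (-1)*a^2*d*x0^2*x1^2*y0^2 + (-1)*a*d*x0^2*x2^2*y0^2 + a*d*x0^4*y3^2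 + (-1)*a^2*x0^2*x1^2*y3^2 + (-1)*a*x0^2*x2^2*y3^2 + a^2*d*x0^4*y1^2 + a*d*x0^4*y2^2 + (-1)*a^3*x0^2*x1^2*y1^2 + (-1)*a^2*x0^2*x1^2*y2^2 + (-1)*a^2*x0^2*x2^2*y1^2 + (-1)*a*x0^2*x2^2*y2^2 + (-2)*a^2*x1^3*x2*y0*y3 + (-2)*a*x1*x2^3*y0*y3 + (-2)*a^2*x1^2*x2^2*y0^2 + (-2)*a^2*d*x0^4*y0^2 + (2)*a^3*x0^2*x1^2*y0^2 + (2)*a^2*x0^2*x2^2*y0^2) * hQ1 + ((-8)*a*d*x1^2*x2^2*y1*y2 + (-8)*a*d^2*x0^2*x1*x2*y0^2 + (4)*a^2*d*x0^2*x1*x2*y1^2 + (4)*a*d*x0^2*x1*x2*y2^2 + (4)*a^2*d*x1^3*x2*y0^2 + (4)*a*d*x1*x2^3*y0^2 + (-2)*a^3*x1^3*x2*y1^2 + (-2)*a^2*x1^3*x2*y2^2 + (-2)*a^2*x1*x2^3*y1^2 + (-2)*a*x1*x2^3*y2^2 + (8)*a^2*d*x0^2*x1^2*y0*y3 + (8)*a^2*d*x0^2*x1^2*y1*y2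 + (8)*a*d*x0^2*x2^2*y0*y3 + (8)*a*d*x0^2*x2^2*y1*y2 + (2)*a^2*d*x0^4*y0*y3 + (2)*a^2*d*x0^4*y1*y2 + (-2)*a^3*x0^2*x1^2*y0*y3 + (-2)*a^3*x0^2*x1^2*y1*y2 + (-2)*a^2*x0^2*x2^2*y0*y3 + (-2)*a^2*x0^2*x2^2*y1*y2 + (-1)*a^3*x1^4*y0*y3 + (-1)*a^3*x1^4*y1*y2 + (-1)*a*x2^4*y0*y3 + (-1)*a*x2^4*y1*y2 + (-8)*a*d^2*x0^4*y0*y3 + (-8)*a*d^2*x0^4*y1*y2) * hQ2, by ring⟩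
  · exact ⟨by linear_combination (d*x1^2*y0^2*y2^2 + (2)*d*x1*x2*y0^2*y1*y2 + d*x2^2*y0^2*y1^2 + x1^2*y2^2*y3^2 + (-2)*x1*x2*y1*y2*y3^2 + x2^2*y1^2*y3^2 + (5)*d*x0^2*y0^2*y3^2 + (-1)*d^2*x0^2*y0^4 + (-2)*d*x0*x3*y0^3*y3 + (-1)*x0^2*y3^4 + (2)*x0*x3*y0*y3^3 + (-1)*x3^2*y0^2*y3^2 + (-1)*a*x1^2*y0^2*y3^2 + (-1)*x2^2*y0^2*y3^2 + (4)*a*x0^2*y1^2*y2^2 + (-8)*d*x0^2*y1^2*y2^2 + x0^2*y2^4 + a^2*x0^2*y1^4 + (2)*a*d*x0^2*y0^4 + (-2)*a^2*x0^2*y0^2*y1^2 + (-2)*a*x0^2*y0^2*y2^2) * hP1 + ((-8)*d*x1*x2*y0*y1*y2*y3 + (4)*d^2*x0^2*y0^3*y3 + (-4)*d*x0^2*y0*y3^3 + (-2)*a*d*x1^2*y0^3*y3 + (-2)*d*x2^2*y0^3*y3 + (2)*a*x1^2*y0*y3^3 + (2)*x2^2*y0*y3^3 + (-4)*a*x0*x3*y1^2*y2^2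 + (-4)*a*x1*x2*y1^2*y2^2 + (8)*d*x0*x3*y1^2*y2^2 + (8)*d*x1*x2*y1^2*y2^2 + (-1)*x0*x3*y2^4 + (-1)*x1*x2*y2^4 + (-1)*a^2*x0*x3*y1^4 + (-1)*a^2*x1*x2*y1^4 + (-2)*a*d*x0*x3*y0^4 + (-2)*a*d*x1*x2*y0^4 + (2)*a^2*x0*x3*y0^2*y1^2 + (2)*a^2*x1*x2*y0^2*y1^2 + (2)*a*x0*x3*y0^2*y2^2 + (2)*a*x1*x2*y0^2*y2^2) * hP2 + ((4)*d*x0^2*x1*x2*y1*y2 + d^2*x0^4*y0^2 + a*x1^4*y2^2 + x1^2*x2^2*y2^2 + (-2)*a*x1^3*x2*y1*y2 + (-2)*x1*x2^3*y1*y2 + a*x1^2*x2^2*y1^2 + x2^4*y1^2 + (-4)*d*x0^2*x1*x2*y0*y3 + (-1)*a*d*x0^2*x1^2*y0^2 + (-1)*d*x0^2*x2^2*y0^2 + d*x0^4*y3^2 + (-1)*a*x0^2*x1^2*y3^2 + (-1)*x0^2*x2^2*y3^2 + a*d*x0^4*y1^2 + d*x0^4*y2^2 + (-1)*a^2*x0^2*x1^2*y1^2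 + (-1)*a*x0^2*x1^2*y2^2 + (-1)*a*x0^2*x2^2*y1^2 + (-1)*x0^2*x2^2*y2^2 + (2)*a*x1^3*x2*y0*y3 + (2)*x1*x2^3*y0*y3 + (-2)*a*x1^2*x2^2*y0^2 + (-2)*a*d*x0^4*y0^2 + (2)*a^2*x0^2*x1^2*y0^2 + (2)*a*x0^2*x2^2*y0^2) * hQ1 + ((-8)*d*x1^2*x2^2*y1*y2 + (8)*d^2*x0^2*x1*x2*y0^2 + (-4)*a*d*x0^2*x1*x2*y1^2 + (-4)*d*x0^2*x1*x2*y2^2 + (-4)*a*d*x1^3*x2*y0^2 + (-4)*d*x1*x2^3*y0^2 + (2)*a^2*x1^3*x2*y1^2 + (2)*a*x1^3*x2*y2^2 + (2)*a*x1*x2^3*y1^2 + (2)*x1*x2^3*y2^2 + (8)*a*d*x0^2*x1^2*y0*y3 + (8)*a*d*x0^2*x1^2*y1*y2 + (8)*d*x0^2*x2^2*y0*y3 + (8)*d*x0^2*x2^2*y1*y2 + (2)*a*d*x0^4*y0*y3 + (2)*a*d*x0^4*y1*y2 + (-2)*a^2*x0^2*x1^2*y0*y3 + (-2)*a^2*x0^2*x1^2*y1*y2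 + (-2)*a*x0^2*x2^2*y0*y3 + (-2)*a*x0^2*x2^2*y1*y2 + (-1)*a^2*x1^4*y0*y3 + (-1)*a^2*x1^4*y1*y2 + (-1)*x2^4*y0*y3 + (-1)*x2^4*y1*y2 + (-8)*d^2*x0^4*y0*y3 + (-8)*d^2*x0^4*y1*y2) * hQ2, by ring⟩
  · exact ⟨by linear_combination ((-2)*d^2*x0^2*y0^2*y3^2 + x3^2*y3^4 + (-1)*a*x1^2*y2^2*y3^2 + (-1)*a*x2^2*y1^2*y3^2 + (-1)*a^2*x1^2*y1^2*y3^2 + (-1)*x2^2*y2^2*y3^2 + (-1)*d*x0^2*y3^4 + a*x1^2*y3^4 + x2^2*y3^4 + (4)*a*d*x0^2*y1^2*y2^2 + d*x0^2*y2^4 + a^2*d*x0^2*y1^4 + (-2)*a*d*x0^2*y0^2*y2^2 + (-2)*a^2*d*x0^2*y0^2*y1^2 + (2)*a*d^2*x0^2*y0^4) * hP1 + ((2)*a*d*x1^2*y0*y2^2*y3 + (8)*a*d*x1*x2*y0*y1*y2*y3 + (2)*a*d*x2^2*y0*y1^2*y3 + (-2)*a^2*d*x1^2*y0*y1^2*y3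 + (-2)*d*x2^2*y0*y2^2*y3 + (-4)*a*d*x0*x3*y1^2*y2^2 + (-4)*a*d*x1*x2*y1^2*y2^2 + (-1)*d*x0*x3*y2^4 + (-1)*d*x1*x2*y2^4 + (-1)*a^2*d*x0*x3*y1^4 + (-1)*a^2*d*x1*x2*y1^4 + (2)*a*d*x0*x3*y0^2*y2^2 + (2)*a*d*x1*x2*y0^2*y2^2 + (2)*a^2*d*x0*x3*y0^2*y1^2 + (2)*a^2*d*x1*x2*y0^2*y1^2 + (-2)*a*d^2*x0*x3*y0^4 + (-2)*a*d^2*x1*x2*y0^4) * hP2 + (d^3*x0^4*y0^2 + (-1)*a*d*x0^2*x1^2*y2^2 + (-1)*a*d*x0^2*x2^2*y1^2 + (-1)*a^2*d*x0^2*x1^2*y1^2 + (-1)*d*x0^2*x2^2*y2^2 + d^2*x0^4*y3^2 + (-2)*a*d*x0^2*x1^2*y3^2 + (-2)*d*x0^2*x2^2*y3^2 + a^2*x1^4*y3^2 + (2)*a*x1^2*x2^2*y3^2 + x2^4*y3^2 + a*d^2*x0^4*y1^2 + d^2*x0^4*y2^2 + (-2)*a*d*x1^2*x2^2*y0^2 +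 (-2)*a*d^2*x0^4*y0^2 + (2)*a^2*d*x0^2*x1^2*y0^2 + (2)*a*d*x0^2*x2^2*y0^2) * hQ1 + ((2)*a*d*x1^3*x2*y2^2 + (8)*a*d*x1^2*x2^2*y1*y2 + (2)*a*d*x1*x2^3*y1^2 + (-2)*a^2*d*x1^3*x2*y1^2 + (-2)*d*x1*x2^3*y2^2 + (-1)*a^2*d*x1^4*y0*y3 + (-1)*a^2*d*x1^4*y1*y2 + (-1)*d*x2^4*y0*y3 + (-1)*d*x2^4*y1*y2 + (2)*a*d^2*x0^4*y0*y3 + (2)*a*d^2*x0^4*y1*y2 + (-2)*a^2*d*x0^2*x1^2*y0*y3 + (-2)*a^2*d*x0^2*x1^2*y1*y2 + (-2)*a*d*x0^2*x2^2*y0*y3 + (-2)*a*d*x0^2*x2^2*y1*y2) * hQ2, by ring⟩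
end

section
/- For all k-points u = (u0,u1,u2,u3,u4) and v = (v0,v1,v2,v3,v4) of the pentagonal elliptic curve E_t, the 5-tuple w = (u0^2*v1*v4 − u1*u4*v0^2, u0*u1*v2*v4 − u2*u4*v0*v1, u0*u2*v3*v4 − u3*u4*v0*v2, u0*u3*v1*v2 − u1*u2*v0*v3, u0*u4*v1*v3 − u1*u3*v0*v4) again satisfies the five quadric equations defining E_t (i.e. the G_1-invariant bidegree (2,2) addition law maps pairs of points of E_t to points of E_t; note w(P, O) = u0 · P). -/
/-- A `k`-point of the pentagonal elliptic curve `E_t ⊂ P^4`. -/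
def isPentPoint {k : Type*} [Field k] (t u0 u1 u2 u3 u4 : k) : Prop :=
  ¬(u0 = 0 ∧ u1 = 0 ∧ u2 = 0 ∧ u3 = 0 ∧ u4 = 0) ∧
  t * u0 ^ 2 + u2 * u3 - u1 * u4 = 0 ∧
  t * u0 * u1 + u2 * u4 - u3 ^ 2 = 0 ∧
  u1 ^ 2 + u0 * u2 - u3 * u4 = 0 ∧
  u1 * u2 + u0 * u3 - u4 ^ 2 = 0 ∧
  u2 ^ 2 - u1 * u3 + t * u0 * u4 = 0

/-- The five defining quadrics of `E_t`, as a predicate on a (not necessarily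
nonzero) 5-tuple. -/
def pentEqs {k : Type*} [Field k] (t w0 w1 w2 w3 w4 : k) : Prop :=
  t * w0 ^ 2 + w2 * w3 - w1 * w4 = 0 ∧
  t * w0 * w1 + w2 * w4 - w3 ^ 2 = 0 ∧
  w1 ^ 2 + w0 * w2 - w3 * w4 = 0 ∧
  w1 * w2 + w0 * w3 - w4 ^ 2 = 0 ∧
  w2 ^ 2 - w1 * w3 + t * w0 * w4 = 0

/-- The `G_1`-invariant bidegree (2,2) addition law maps pairs of points of the
pentagonal elliptic curve `E_t` to tuples satisfying the five quadrics of `E_t`. -/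
theorem pentagonal_addition_law_on_curve {k : Type*} [Field k] (t : k)
    (hns : t * (t ^ 2 - 11 * t - 1) ≠ 0)
    (u0 u1 u2 u3 u4 v0 v1 v2 v3 v4 : k)
    (hu : isPentPoint t u0 u1 u2 u3 u4)
    (hv : isPentPoint t v0 v1 v2 v3 v4) :
    pentEqs t
      (u0 ^ 2 * v1 * v4 - u1 * u4 * v0 ^ 2)
      (u0 * u1 * v2 * v4 - u2 * u4 * v0 * v1)
      (u0 * u2 * v3 * v4 - u3 * u4 * v0 * v2)
      (u0 * u3 * v1 * v2 - u1 * u2 * v0 * v3)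
      (u0 * u4 * v1 * v3 - u1 * u3 * v0 * v4) := by
  have ht : t ≠ 0 := fun h => hns (by rw [h]; ring)
  have ht2 : t ^ 2 ≠ 0 := pow_ne_zero 2 ht
  obtain ⟨-, hu1, hu2, hu3, hu4, hu5⟩ := hu
  obtain ⟨-, hv1, hv2, hv3, hv4, hv5⟩ := hv
  have key0 : t ^ 2 * (t * (u0 ^ 2 * v1 * v4 - u1 * u4 * v0 ^ 2) ^ 2 + (u0 * u2 * v3 * v4 - u3 * u4 * v0 * v2) * (u0 * u3 * v1 * v2 - u1 * u2 * v0 * v3) - (u0 * u1 * v2 * v4 - u2 * u4 * v0 * v1) * (u0 * u4 * v1 * v3 - u1 * u3 * v0 * v4)) = 0 := by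
    linear_combination (norm := ring1)
      ((-2*t^2)*u1*u4*v0^2*v1*v4 + (t)*u2*u3*v1*v2*v3*v4 + (-t)*u1*u4*v1*v2*v3*v4 + (t^2)*u0^2*v1^2*v4^2 + (-t)*u2*u3*v1^2*v4^2 + (t)*u1*u4*v1^2*v4^2) * hu1 +
      ((-t)*u2^2*v0*v3^2*v4 + (t)*u1*u3*v0*v2*v4^2) * hu2 +
      ((t^3)*u4^2*v0^4 + (-2*t^2)*u4^2*v0^2*v1*v4 + (-t)*u4^2*v1*v2*v3*v4 + (t)*u4^2*v1^2*v4^2) * hu3 +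
      ((t^2)*u3*u4*v0^2*v2*v3 + (t^2)*u3*u4*v0^2*v1*v4 + (2*t)*u3*u4*v1*v2*v3*v4 + (t)*u3*u4*v0*v3^2*v4 + (-2*t)*u3*u4*v1^2*v4^2 + (-t)*u3*u4*v0*v2*v4^2) * hu4 +
      ((-t)*u3^2*v1*v2*v3*v4 + (-t)*u3^2*v0*v3^2*v4 + (t)*u2*u4*v0*v3^2*v4 + (t)*u3^2*v1^2*v4^2) * hu5 +
      ((-t^2)*u0*u2*u4^2*v0^2 + (t^2)*u3*u4^3*v0^2 + (-t)*u0*u3^2*u4*v2*v3 + (t)*u0*u2*u4^2*v2*v3 + (-t)*u0*u3^2*u4*v1*v4 + (t)*u0*u2*u4^2*v1*v4) * hv1 +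
      ((-t)*u0*u3^2*u4*v2^2 + (t)*u0*u2*u4^2*v1*v3) * hv2 +
      ((t)*u1*u3^3*v4^2 + (t - t^2)*u0*u3^2*u4*v4^2 + (-t)*u3*u4^3*v4^2) * hv3 +
      ((-t)*u1*u3^3*v3*v4 + (-t + t^2)*u0*u3^2*u4*v3*v4 + (t)*u3*u4^3*v3*v4) * hv4 +
      ((-t)*u0*u2*u4^2*v3^2 + (t)*u0*u3^2*u4*v2*v4) * hv5
  have key1 : t ^ 2 * (t * (u0 ^ 2 * v1 * v4 - u1 * u4 * v0 ^ 2) * (u0 * u1 * v2 * v4 - u2 * u4 * v0 * v1) + (u0 * u2 * v3 * v4 - u3 * u4 * v0 * v2) * (u0 * u4 * v1 * v3 - u1 * u3 * v0 * v4) - (u0 * u3 * v1 * v2 - u1 * u2 * v0 * v3) ^ 2) = 0 := by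
    linear_combination (norm := ring1)
      ((-t)*u3^2*v1^2*v2^2 + (-t^2)*u2*u4*v0^2*v3^2 + (-t^2)*u2*u4*v0*v1^2*v4 + (t)*u2*u4*v1*v3^2*v4 + (t^2)*u0*u1*v1*v2*v4^2) * hu1 +
      ((2*t)*u2*u3*v0*v1*v2*v3 + (t)*u2*u3*v0^2*v3^2 + (-t^2)*u1*u4*v0^2*v2*v4 + (-t)*u2*u3*v1*v2*v4^2 + (t)*u1*u4*v1*v2*v4^2 + (-t)*u2*u3*v0*v3*v4^2) * hu2 +
      ((-t^2)*u2^2*v0^2*v3^2) * hu3 +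
      ((t^3)*u4^2*v0^3*v1 + (-t^2)*u4^2*v0^2*v3^2 + (-t^2)*u4^2*v0*v1^2*v4 + (t^2)*u4^2*v0^2*v2*v4 + (t)*u4^2*v1*v3^2*v4 + (-t)*u4^2*v1*v2*v4^2) * hu4 +
      ((-2*t)*u3*u4*v0*v1*v2*v3 + (t^2)*u0*u2*v0^2*v3^2 + (-t)*u3*u4*v0^2*v3^2 + (t^2)*u3*u4*v0*v1^2*v4 + (-t)*u3*u4*v1*v3^2*v4 + (t)*u3*u4*v1*v2*v4^2 + (t)*u3*u4*v0*v3*v4^2) * hu5 +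
      ((-t^2)*u0*u3*u4^2*v0*v1 + (t^2)*u4^4*v0*v1 + (1)*u2*u3^3*v3^2 + (-1)*u1*u3^2*u4*v3^2 + (2*t)*u0*u3*u4^2*v3^2 + (-t)*u4^4*v3^2 + (t)*u2*u3^3*v2*v4 + (-t)*u1*u3^2*u4*v2*v4 + (-t)*u0*u3*u4^2*v2*v4 + (t)*u4^4*v2*v4) * hv1 +
      ((1)*u2*u3^3*v2*v3 + (-1)*u1*u3^2*u4*v2*v3 + (2*t)*u0*u3*u4^2*v2*v3 + (-t)*u4^4*v2*v3 + (t)*u1*u3^2*u4*v1*v4 + (-t^2)*u0*u3*u4^2*v1*v4) * hv2 +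
      ((t)*u2*u3^3*v2^2 + (-t)*u1*u3^2*u4*v2^2) * hv3 +
      ((-t)*u2*u3^3*v0*v2 + (t)*u1*u3^2*u4*v0*v2 + (-1)*u2*u3^3*v3*v4 + (1)*u1*u3^2*u4*v3*v4 + (-t)*u0*u3*u4^2*v3*v4) * hv5
  have key2 : t ^ 2 * ((u0 * u1 * v2 * v4 - u2 * u4 * v0 * v1) ^ 2 + (u0 ^ 2 * v1 * v4 - u1 * u4 * v0 ^ 2) * (u0 * u2 * v3 * v4 - u3 * u4 * v0 * v2) - (u0 * u3 * v1 * v2 - u1 * u2 * v0 * v3) * (u0 * u4 * v1 * v3 - u1 * u3 * v0 * v4)) = 0 := by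
    linear_combination (norm := ring1)
      ((-t)*u3*u4*v1^2*v2*v3 + (-t)*u3*u4*v0*v1*v2*v4 + (-t^2)*u3*u4*v0^2*v3*v4 + (t)*u1^2*v2^2*v4^2 + (-t)*u3*u4*v2^2*v4^2 + (t)*u0*u2*v1*v3*v4^2 + (t)*u3*u4*v1*v3*v4^2) * hu1 +
      ((t)*u2*u4*v0*v1*v3^2 + (t)*u3^2*v0*v1*v2*v4 + (-2*t)*u2*u4*v0*v1*v2*v4 + (t)*u3^2*v0^2*v3*v4 + (-t)*u2*u4*v0^2*v3*v4 + (1)*u3^2*v2^2*v4^2 + (-1)*u2*u4*v2^2*v4^2 + (-1)*u3^2*v1*v3*v4^2 + (1)*u2*u4*v1*v3*v4^2) * hu2 +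
      ((-t^2)*u2*u3*v0^2*v3*v4 + (-t)*u2*u3*v2^2*v4^2 + (t)*u1*u4*v2^2*v4^2) * hu3 +
      ((t^2)*u4^2*v0^2*v1^2 + (-t)*u4^2*v0*v1*v3^2 + (2*t)*u4^2*v0*v1*v2*v4 + (t^2)*u0*u3*v0^2*v3*v4 + (t)*u4^2*v0^2*v3*v4 + (t)*u0*u3*v2^2*v4^2 + (1)*u4^2*v2^2*v4^2 + (-t)*u0*u3*v1*v3*v4^2 + (-1)*u4^2*v1*v3*v4^2) * hu5 +
      ((t)*u1*u3*u4^2*v1^2 + (-t^2)*u0*u4^3*v1^2 + (t)*u1*u3*u4^2*v0*v2 + (1)*u3^4*v3*v4 + (-2 + t)*u2*u3^2*u4*v3*v4 + (1 - 2*t)*u1*u3*u4^2*v3*v4 + (-t + t^2)*u0*u4^3*v3*v4) * hv1 +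
      ((1)*u3^4*v2*v4 + (-2)*u2*u3^2*u4*v2*v4 + (1)*u1*u3*u4^2*v2*v4 + (-t)*u0*u4^3*v2*v4) * hv2 +
      ((t)*u2*u3^2*u4*v2*v3 + (-2*t)*u1*u3*u4^2*v2*v3 + (t^2)*u0*u4^3*v2*v3 + (t)*u1*u3*u4^2*v1*v4 + (-t^2)*u0*u4^3*v1*v4) * hv3 +
      ((-t)*u2*u3^2*u4*v0*v3 + (t)*u1*u3*u4^2*v0*v3 + (-t^2)*u0*u4^3*v0*v3) * hv5
  have key3 : t ^ 2 * ((u0 * u1 * v2 * v4 - u2 * u4 * v0 * v1) * (u0 * u2 * v3 * v4 - u3 * u4 * v0 * v2) + (u0 ^ 2 * v1 * v4 - u1 * u4 * v0 ^ 2) * (u0 * u3 * v1 * v2 - u1 * u2 * v0 * v3) - (u0 * u4 * v1 * v3 - u1 * u3 * v0 * v4) ^ 2) = 0 := by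
    linear_combination (norm := ring1)
      ((t^2)*u4^2*v0^3*v3 + (-t)*u4^2*v1^2*v3^2 + (t)*u0*u3*v1^2*v2*v4 + (-t)*u1*u2*v0*v1*v3*v4 + (-t + t^2)*u4^2*v0*v1*v3*v4 + (t)*u1*u2*v2*v3*v4^2 + (t)*u4^2*v2*v3*v4^2) * hu1 +
      ((-t)*u3*u4*v0^2*v1*v2 + (-t)*u3*u4*v0^3*v3 + (1)*u3*u4*v1^2*v2*v4 + (-t)*u3*u4*v0*v2^2*v4 + (1 + t)*u3*u4*v0*v1*v3*v4 + (-1)*u3*u4*v2*v3*v4^2) * hu2 +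
      ((t^2)*u2*u4*v0^3*v3 + (-t)*u2*u4*v0*v1*v3*v4 + (-t^2)*u3^2*v0^2*v4^2 + (t)*u2*u4*v2*v3*v4^2) * hu3 +
      ((t)*u2*u3*v0*v1*v3*v4 + (-t)*u2*u3*v2*v3*v4^2) * hu4 +
      ((-t^2)*u0*u4*v0^3*v3 + (t - t^2)*u0*u4*v0*v1*v3*v4 + (-t)*u0*u4*v2*v3*v4^2) * hu5 +
      ((-1)*u3^3*u4*v1*v2 + (1 + t)*u2*u3*u4^2*v1*v2 + (-1)*u3^3*u4*v0*v3 + (1)*u2*u3*u4^2*v0*v3 + (t)*u1*u4^3*v0*v3) * hv1 +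
      ((-t)*u2*u3*u4^2*v3*v4 + (t)*u1*u4^3*v3*v4) * hv2 +
      ((t)*u2*u3*u4^2*v3^2 + (-t)*u1*u4^3*v3^2 + (-t)*u0*u2*u3^2*v2*v4 + (t)*u2*u3*u4^2*v2*v4) * hv3 +
      ((1)*u3^3*u4*v2*v3 + (-1 - t)*u2*u3*u4^2*v2*v3) * hv4 +
      ((t)*u0*u2*u3^2*v0*v4 + (-t)*u3^3*u4*v0*v4) * hv5
  have key4 : t ^ 2 * ((u0 * u2 * v3 * v4 - u3 * u4 * v0 * v2) ^ 2 - (u0 * u1 * v2 * v4 - u2 * u4 * v0 * v1) * (u0 * u3 * v1 * v2 - u1 * u2 * v0 * v3) + t * (u0 ^ 2 * v1 * v4 - u1 * u4 * v0 ^ 2) * (u0 * u4 * v1 * v3 - u1 * u3 * v0 * v4)) = 0 := by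
    linear_combination (norm := ring1)
      ((-t)*u1*u3*v1*v2^2*v4 + (t^2)*u0*u4*v1^2*v3*v4 + (-t^2)*u1*u3*v0*v1*v4^2 + (t)*u2^2*v3^2*v4^2) * hu1 +
      ((-t^2)*u4^2*v0^2*v1*v3 + (t)*u4^2*v1^2*v3*v4 + (t)*u1*u2*v0*v2*v3*v4) * hu2 +
      ((t^3)*u3*u4*v0^3*v4 + (-t)*u3*u4*v1*v2^2*v4 + (-t^2)*u3*u4*v0*v1*v4^2) * hu3 +
      ((-t^2)*u2*u4*v0^2*v1*v3 + (t)*u3^2*v1*v2^2*v4 + (t)*u3^2*v0*v2*v3*v4 + (-t)*u2*u4*v0*v2*v3*v4 + (t^2)*u3^2*v0*v1*v4^2 + (-t)*u3^2*v3^2*v4^2 + (t)*u2*u4*v3^2*v4^2) * hu4 +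
      ((-t)*u2*u3*v3^2*v4^2) * hu5 +
      ((t)*u3^2*u4^2*v2^2 + (t)*u0*u2*u3*u4*v1*v3 + (-t)*u3^2*u4^2*v1*v3 + (-t^2)*u0*u2*u3*u4*v0*v4 + (t^2)*u3^2*u4^2*v0*v4) * hv1 +
      ((t)*u0*u2*u3*u4*v1*v2 + (-t)*u0*u3^3*v4^2 + (t)*u3^2*u4^2*v4^2) * hv2 +
      ((t - t^2)*u0*u2*u3*u4*v3*v4 + (-t)*u2*u4^3*v3*v4) * hv3 +
      ((-t)*u0*u3^3*v2*v4 + (t)*u3^2*u4^2*v2*v4) * hv4 +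
      ((-t)*u3^2*u4^2*v2*v3) * hv5
  exact ⟨(mul_eq_zero.mp key0).resolve_left ht2,
         (mul_eq_zero.mp key1).resolve_left ht2,
         (mul_eq_zero.mp key2).resolve_left ht2,
         (mul_eq_zero.mp key3).resolve_left ht2,
         (mul_eq_zero.mp key4).resolve_left ht2⟩
end

section
/- For all k-points P = (x0,x1,x2,x3) and Q = (y0,y1,y2,y3) of the canonical curve C of level 4, each of the following four 4-tuples again satisfies the two defining equations of C: S_0 = (x3^2*y1^2 − x1^2*y3^2, 4*(x0*x3*y1*y2 − x1*x2*y0*y3), 4*(x0^2*y2^2 − x2^2*y0^2), 4*(x0*x1*y2*y3 − x2*x3*y0*y1)); S_1 = (x0*x1*y0*y3 + d*x2*x3*y1*y2, 4d*x0*x2*y2^2 + x1^2*y1*y3, x0*x3*y2*y3 + x1*x2*y0*y1, x1*x3*y3^2 − 4d*x2^2*y0*y2); S_2 = (4*(x0^2*y0^2 − d^2*x2^2*y2^2), 4*(x0*x1*y0*y1 − d*x2*x3*y2*y3), x1^2*y1^2 − x3^2*y3^2, 4*(x0*x3*y0*y3 − d*x1*x2*y1*y2)); S_3 = (x0*x3*y0*y1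 + d*x1*x2*y2*y3, x1*x3*y1^2 + 4d*x2^2*y0*y2, x0*x1*y1*y2 + x2*x3*y0*y3, −4d*x0*x2*y2^2 + x3^2*y1*y3). (These are, up to scalar, the four bidegree (2,2) addition laws of the canonical curve of level 4.) -/
/-- The two defining equations of the canonical curve `C ⊂ P^3` of level 4:
`X0^2 - d*X2^2 = X1*X3` and `X1^2 - X3^2 = 4*X0*X2`. -/
def onCanonical4 {k : Type*} [Field k] (d z0 z1 z2 z3 : k) : Prop :=
  z0 ^ 2 - d * z2 ^ 2 = z1 * z3 ∧ z1 ^ 2 - z3 ^ 2 = 4 * z0 * z2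

/-- The four (scaled) bidegree (2,2) addition laws of the canonical curve of
level 4 map pairs of points of `C` to tuples satisfying its two equations. -/
theorem canonical4_addition_laws_on_curve {k : Type*} [Field k] (d : k)
    (hchar : (2 : k) ≠ 0) (hns : d * (d + 1) ≠ 0)
    (x0 x1 x2 x3 y0 y1 y2 y3 : k)
    (hP0 : ¬(x0 = 0 ∧ x1 = 0 ∧ x2 = 0 ∧ x3 = 0))
    (hP : onCanonical4 d x0 x1 x2 x3)
    (hQ0 : ¬(y0 = 0 ∧ y1 = 0 ∧ y2 = 0 ∧ y3 = 0))
    (hQ : onCanonical4 d y0 y1 y2 y3) :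
    onCanonical4 d
      (x3 ^ 2 * y1 ^ 2 - x1 ^ 2 * y3 ^ 2)
      (4 * (x0 * x3 * y1 * y2 - x1 * x2 * y0 * y3))
      (4 * (x0 ^ 2 * y2 ^ 2 - x2 ^ 2 * y0 ^ 2))
      (4 * (x0 * x1 * y2 * y3 - x2 * x3 * y0 * y1)) ∧
    onCanonical4 d
      (x0 * x1 * y0 * y3 + d * x2 * x3 * y1 * y2)
      (4 * d * x0 * x2 * y2 ^ 2 + x1 ^ 2 * y1 * y3)
      (x0 * x3 * y2 * y3 + x1 * x2 * y0 * y1)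
      (x1 * x3 * y3 ^ 2 - 4 * d * x2 ^ 2 * y0 * y2) ∧
    onCanonical4 d
      (4 * (x0 ^ 2 * y0 ^ 2 - d ^ 2 * x2 ^ 2 * y2 ^ 2))
      (4 * (x0 * x1 * y0 * y1 - d * x2 * x3 * y2 * y3))
      (x1 ^ 2 * y1 ^ 2 - x3 ^ 2 * y3 ^ 2)
      (4 * (x0 * x3 * y0 * y3 - d * x1 * x2 * y1 * y2)) ∧
    onCanonical4 d
      (x0 * x3 * y0 * y1 + d * x1 * x2 * y2 * y3)
      (x1 * x3 * y1 ^ 2 + 4 * d * x2 ^ 2 * y0 * y2)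
      (x0 * x1 * y1 * y2 + x2 * x3 * y0 * y3)
      (-(4 * d * x0 * x2 * y2 ^ 2) + x3 ^ 2 * y1 * y3) := by
  obtain ⟨hP1, hP2⟩ := hP
  obtain ⟨hQ1, hQ2⟩ := hQ
  refine ⟨⟨?_, ?_⟩, ⟨?_, ?_⟩, ⟨?_, ?_⟩, ⟨?_, ?_⟩⟩
  · linear_combination (((16*x2 ^ 2*y0 ^ 2*y1*y3) + (-16*x1*x3*y0 ^ 2*y2 ^ 2) + (16*x0 ^ 2*y1*y2 ^ 2*y3) + (-16*x0 ^ 2*y0 ^ 2*y2 ^ 2) + (16*d*x2 ^ 2*y0 ^ 2*y2 ^ 2))) * hP1 + (((-1*x3 ^ 2*y1 ^ 4) + (2*x1 ^ 2*y1 ^ 2*y3 ^ 2) + (-1*x1 ^ 2*y1 ^ 4) + (16*x1 ^ 2*y0 ^ 2*y2 ^ 2) + (4*x0*x2*y1 ^ 4) + (-16*x0*x2*y0*y1 ^ 2*y2))) * hP2 + (((-16*x0 ^ 2*x2 ^ 2*y1*y3) + (16*x0 ^ 4*y2 ^ 2) + (-16*d*x2 ^ 4*y0 ^ 2))) * hQ1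 + (((-1*x1 ^ 4*y3 ^ 2) + (x1 ^ 4*y1 ^ 2) + (4*x1 ^ 4*y0*y2) + (-8*x0*x1 ^ 2*x2*y1 ^ 2) + (-16*x0*x1 ^ 2*x2*y0*y2) + (16*x0 ^ 2*x2 ^ 2*y1 ^ 2))) * hQ2
  · linear_combination (0:k)*hP1
  · linear_combination (((x1 ^ 2*y1*y3 ^ 3) + (4*d*x0*x2*y2 ^ 2*y3 ^ 2))) * hP1 + (((d*x0 ^ 2*y2 ^ 2*y3 ^ 2) + (-1*d ^ 2*x2 ^ 2*y1 ^ 2*y2 ^ 2))) * hP2 + (((x0 ^ 2*x1 ^ 2*y1 ^ 2) + (-4*x0 ^ 2*x1 ^ 2*y0*y2) + (-1*d*x1 ^ 2*x2 ^ 2*y1 ^ 2))) * hQ1 + (((x0 ^ 2*x1 ^ 2*y1*y3) + (-1*x0 ^ 2*x1 ^ 2*y0 ^ 2) + (-1*d*x1 ^ 2*x2 ^ 2*y1*y3) + (d*x0 ^ 2*x1 ^ 2*y2 ^ 2) + (-4*d ^ 2*x0*x2 ^ 3*y2 ^ 2))) * hQ2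
  · linear_combination (((-4*x1*x3*y0*y1 ^ 2*y2) + (16*x1*x3*y0 ^ 2*y2 ^ 2) + (4*x0 ^ 2*y0*y2*y3 ^ 2) + (-4*x0 ^ 2*y0*y1 ^ 2*y2) + (16*x0 ^ 2*y0 ^ 2*y2 ^ 2) + (-8*d*x2 ^ 2*y0*y2*y3 ^ 2) + (8*d*x2 ^ 2*y0*y1 ^ 2*y2) + (-16*d*x2 ^ 2*y0 ^ 2*y2 ^ 2))) * hP1 + (((x1 ^ 2*y3 ^ 4) + (4*x1 ^ 2*y0*y1 ^ 2*y2) + (-16*x1 ^ 2*y0 ^ 2*y2 ^ 2) + (4*d*x0*x2*y1*y2 ^ 2*y3))) * hP2 + (((-4*x0*x1 ^ 2*x2*y1*y3) + (-16*d*x0 ^ 2*x2 ^ 2*y2 ^ 2))) * hQ1 + (((x1 ^ 4*y3 ^ 2) + (-4*x1 ^ 4*y0*y2) + (-4*x0*x1 ^ 2*x2*y3 ^ 2) + (16*x0*x1 ^ 2*x2*y0*y2) + (4*x0 ^ 4*y0*y2) + (-12*d*x0 ^ 2*x2 ^ 2*y0*y2) + (8*d ^ 2*x2 ^ 4*y0*y2)))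 * hQ2
  · linear_combination (((16*x0 ^ 2*y0 ^ 2*y1*y3) + (16*d*x1*x3*y0 ^ 2*y2 ^ 2) + (16*d*x0 ^ 2*y0 ^ 2*y2 ^ 2) + (16*d ^ 2*x2 ^ 2*y1*y2 ^ 2*y3) + (-16*d ^ 2*x2 ^ 2*y0 ^ 2*y2 ^ 2))) * hP1 + (((d*x3 ^ 2*y3 ^ 4) + (d*x1 ^ 2*y3 ^ 4) + (-2*d*x1 ^ 2*y1 ^ 2*y3 ^ 2) + (-16*d*x1 ^ 2*y0 ^ 2*y2 ^ 2) + (-4*d*x0*x2*y3 ^ 4) + (-16*d*x0*x2*y0*y2*y3 ^ 2))) * hP2 + (((16*x0 ^ 4*y0 ^ 2) + (16*d*x0 ^ 2*x2 ^ 2*y1*y3) + (-16*d ^ 3*x2 ^ 4*y2 ^ 2))) * hQ1 + (((d*x1 ^ 4*y3 ^ 2) + (-1*d*x1 ^ 4*y1 ^ 2) + (-4*d*x1 ^ 4*y0*y2) + (-8*d*x0*x1 ^ 2*x2*y3 ^ 2) + (16*d*x0*x1 ^ 2*x2*y0*y2) + (16*d*x0 ^ 2*x2 ^ 2*y3 ^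 2))) * hQ2
  · linear_combination (0:k)*hP1
  · linear_combination (((x1 ^ 2*y1 ^ 3*y3) + (-4*x0*x2*y1 ^ 3*y3) + (-4*d*x0*x2*y1 ^ 2*y2 ^ 2))) * hP1 + (((x1*x3*y1 ^ 3*y3) + (-1*x0 ^ 2*y0 ^ 2*y1 ^ 2) + (4*d*x2 ^ 2*y0*y1*y2*y3) + (d*x2 ^ 2*y0 ^ 2*y3 ^ 2))) * hP2 + (((x0 ^ 2*x1 ^ 2*y1 ^ 2) + (-4*x0 ^ 3*x2*y1 ^ 2) + (-1*d*x1 ^ 2*x2 ^ 2*y1 ^ 2) + (4*d*x1 ^ 2*x2 ^ 2*y0*y2) + (4*d*x0*x2 ^ 3*y1 ^ 2) + (-16*d*x0*x2 ^ 3*y0*y2))) * hQ1 + (((d*x1 ^ 2*x2 ^ 2*y0 ^ 2) + (-4*d*x0*x2 ^ 3*y0 ^ 2) + (-1*d ^ 2*x1 ^ 2*x2 ^ 2*y2 ^ 2))) * hQ2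
  · linear_combination (((-4*x1*x3*y0*y1 ^ 2*y2) + (4*d*x2 ^ 2*y0*y2*y3 ^ 2) + (-4*d*x2 ^ 2*y0*y1 ^ 2*y2))) * hP1 + (((x3 ^ 2*y1 ^ 2*y3 ^ 2) + (x1 ^ 2*y1 ^ 2*y3 ^ 2) + (-1*x1 ^ 2*y1 ^ 4) + (4*x1 ^ 2*y0*y1 ^ 2*y2) + (-4*x0*x2*y1 ^ 2*y3 ^ 2) + (4*x0*x2*y0 ^ 2*y1*y3) + (-8*d*x0*x2*y1*y2 ^ 2*y3))) * hP2 + (((-4*x0*x1 ^ 2*x2*y1*y3) + (16*x0 ^ 2*x2 ^ 2*y1*y3) + (16*d*x0 ^ 2*x2 ^ 2*y2 ^ 2))) * hQ1 + (((x1 ^ 4*y1 ^ 2) + (-4*x0*x1 ^ 2*x2*y1 ^ 2) + (4*d*x0 ^ 2*x2 ^ 2*y0*y2) + (-4*d ^ 2*x2 ^ 4*y0*y2))) * hQ2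
end

section
/- Let k be a field and a ∈ k. If (x0,x1,x2,x3) ∈ k^4 satisfies the equations of the projective normal closure of the Jacobi quartic y^2 = x^4 + 2ax^2 + 1, namely x2^2 = x0^2 + 2a*x0*x3 + x3^2 and x0*x3 = x1^2, then (z0,z1,z2,z3) = (x1, x2, x0 − x3, x0 + x3) satisfies the equations of the Jacobi model J_{(a',b')} with a' = −2(a+1), b' = 4, c' = 2(a−1) (so a' + b' + c' = 0): a'*z0^2 + z1^2 = z2^2, b'*z0^2 + z2^2 = z3^2, and c'*z0^2 + z3^2 = z1^2. Hence (X0:X1:X2:X3) ↦ (X1 : X2 : X0 − X3 : X0 + X3) defines a projective linear isomorphism from the Jacobi quartic closure to the Jacobi model J_{(−2(a+1),4)}. -/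
/-- The linear change of coordinates `(X0:X1:X2:X3) ↦ (X1 : X2 : X0-X3 : X0+X3)`
maps the projective normal closure of the Jacobi quartic
`X2^2 = X0^2 + 2a*X0*X3 + X3^2`, `X0*X3 = X1^2` to the Jacobi model
`J_(a',b')` with `a' = -2*(a+1)`, `b' = 4`, `c' = 2*(a-1)`. -/
theorem jacobi_quartic_to_jacobi_model {k : Type*} [Field k] (a : k)
    (x0 x1 x2 x3 : k)
    (h1 : x2 ^ 2 = x0 ^ 2 + 2 * a * x0 * x3 + x3 ^ 2)
    (h2 : x0 * x3 = x1 ^ 2) :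
    (-(2 * (a + 1)) * x1 ^ 2 + x2 ^ 2 = (x0 - x3) ^ 2) ∧
    (4 * x1 ^ 2 + (x0 - x3) ^ 2 = (x0 + x3) ^ 2) ∧
    (2 * (a - 1) * x1 ^ 2 + (x0 + x3) ^ 2 = x2 ^ 2) := by
  exact ⟨by linear_combination h1 + 2*(a+1)*h2, by linear_combination -4*h2, by linear_combination -h1 - 2*(a-1)*h2⟩
end

section
/- Let k be a field and a ∈ k, and suppose the polynomial z^2 + 2a*z + 1 has no root in k. Then the only tuple (x0,x1,x2,x3) ∈ k^4 with x2 = 0 satisfying x2^2 = x0^2 + 2a*x0*x3 + x3^2 and x0*x3 = x1^2 is (0,0,0,0). Consequently every k-rational point of the projective normal closure of the Jacobi quartic lies in the affine patch X2 ≠ 0, i.e. that affine model is arithmetically complete (k-complete). -/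
/-- If `z^2 + 2a*z + 1` has no root in `k`, then the projective normal closure
of the Jacobi quartic `X2^2 = X0^2 + 2a*X0*X3 + X3^2`, `X0*X3 = X1^2` has no
`k`-rational point with `X2 = 0`: the affine patch `X2 ≠ 0` is arithmetically
complete. -/
theorem jacobi_quartic_patch_complete {k : Type*} [Field k] (a : k)
    (hirr : ∀ z : k, z ^ 2 + 2 * a * z + 1 ≠ 0) :
    ∀ x0 x1 x2 x3 : k, x2 = 0 →
      x2 ^ 2 = x0 ^ 2 + 2 * a * x0 * x3 + x3 ^ 2 →
      x0 * x3 = x1 ^ 2 →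
      x0 = 0 ∧ x1 = 0 ∧ x2 = 0 ∧ x3 = 0 := by
  intro x0 x1 x2 x3 h2 hq hm
  subst h2
  have h3 : x3 = 0 := by
    by_contra h3
    apply hirr (x0 / x3)
    field_simp
    linear_combination -hq
  subst h3
  have h0 : x0 = 0 := by
    have : x0 ^ 2 = 0 := by linear_combination -hq
    exact pow_eq_zero_iff (by norm_num) |>.mp this
  subst h0
  have h1 : x1 = 0 := by
    have : x1 ^ 2 = 0 := by linear_combination -hm
    exact pow_eq_zero_iff (by norm_num) |>.mp this
  exact ⟨rfl, h1, rfl, rfl⟩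
end

section
/- Let k be a field in which −1 is not a square, and let b ∈ k with c = −1 − b. Then the only tuple (x0,x1,x2,x3) ∈ k^4 with x2 = 0 satisfying the Jacobi model equations x0^2 + x1^2 = x2^2, b*x0^2 + x2^2 = x3^2, c*x0^2 + x3^2 = x1^2 is (0,0,0,0). Consequently the Chudnovsky affine model x^2 + y^2 = 1, λ^2 x^2 + z^2 = 1 (embedded by (x,y,z) ↦ (x:y:1:z) in the Jacobi model with a = 1, b = −λ^2) is arithmetically complete (k-complete) over any field in which −1 is not a square. -/
/-- If `-1` is not a square in `k`, the Jacobi model `J_(1,b)` (with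
`c = -1 - b`) has no `k`-rational point with `X2 = 0`: the Chudnovsky affine
model `x^2 + y^2 = 1`, `λ^2*x^2 + z^2 = 1`, embedded via
`(x,y,z) ↦ (x:y:1:z)`, is arithmetically complete over such a field. -/
theorem chudnovsky_model_complete {k : Type*} [Field k]
    (hsq : ¬∃ r : k, r ^ 2 = -1) (b : k) :
    ∀ x0 x1 x2 x3 : k, x2 = 0 →
      x0 ^ 2 + x1 ^ 2 = x2 ^ 2 →
      b * x0 ^ 2 + x2 ^ 2 = x3 ^ 2 →
      (-1 - b) * x0 ^ 2 + x3 ^ 2 = x1 ^ 2 →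
      x0 = 0 ∧ x1 = 0 ∧ x2 = 0 ∧ x3 = 0 := by
  intro x0 x1 x2 x3 h2 e1 e2 e3
  subst h2
  have h0 : x0 = 0 := by
    by_contra h
    have hx : x1 ^ 2 = -x0 ^ 2 := by linear_combination e1
    exact hsq ⟨x1 / x0, by
      rw [div_pow, hx, neg_div, div_self (pow_ne_zero 2 h)]⟩
  subst h0
  have h1 : x1 = 0 := by
    have : x1 ^ 2 = 0 := by linear_combination e1
    exact pow_eq_zero_iff (n := 2) (by norm_num) |>.mp this
  have h3 : x3 = 0 := by
    have : x3 ^ 2 = 0 := by linear_combination -e2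
    exact pow_eq_zero_iff (n := 2) (by norm_num) |>.mp this
  exact ⟨rfl, h1, rfl, h3⟩
end
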